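/- arXiv:1712.08799 — 4 statements merged into one kernel-verified Lean document; each statement's English description precedes it below -/
import Mathlib

section
/- For every real number a > 0, the sequence y_n = 1/a + 1/(a+1) + ... + 1/(a+n-1) - ln((a+n-1)/a) converges as n → ∞ to ln(a) - ψ(a), where ψ is the digamma function. -/
open Real Filter Topology Set

noncomputable def digamma (x : ℝ) : ℝ := deriv Real.Gamma x / Real.Gamma x

noncomputable def trigamma (x : ℝ) : ℝ := deriv digamma x

theorem yn_tendsto (a : ℝ) (ha : 0 < a) :
    Tendsto (fun n : ℕ =>
        (∑ k ∈ Finset.range n, 1 / (a + k)) - Real.log ((a + n - 1) / a))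
      atTop (𝓝 (Real.log a - digamma a)) := by
  set f : ℝ → ℝ := Real.log ∘ Real.Gamma with hf
  have hne : ∀ {x : ℝ}, 0 < x → ∀ m : ℕ, x ≠ -m := by
    intro x hx m
    have := Nat.cast_nonneg (α := ℝ) m
    intro h; rw [h] at hx; linarith
  have hder : ∀ {x : ℝ}, 0 < x → DifferentiableAt ℝ f x := by
    intro x hx
    exact (Real.differentiableAt_Gamma (hne hx)).log (Real.Gamma_ne_zero (hne hx))
  have h_rec : ∀ x : ℝ, 0 < x → f (x + 1) = f x + Real.log x := by
    intro x hx
    simp only [hf, Function.comp_apply, Real.Gamma_add_one hx.ne',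
      Real.log_mul hx.ne' (Real.Gamma_pos_of_pos hx).ne', add_comm]
  have hder_rec : ∀ x : ℝ, 0 < x → deriv f (x + 1) = deriv f x + 1 / x := by
    intro x hx
    rw [← deriv_comp_add_const, one_div, ← Real.deriv_log,
      ← deriv_add (hder hx) (Real.differentiableAt_log hx.ne')]
    apply EventuallyEq.deriv_eq
    filter_upwards [eventually_gt_nhds hx] using h_rec
  have hder_nat : ∀ n : ℕ, deriv f (a + n) =
      deriv f a + ∑ k ∈ Finset.range n, 1 / (a + k) := by
    intro n
    induction n with
    | zero => simp
    | succ n ih =>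
        have hpos : 0 < a + n := by positivity
        have : a + (n + 1 : ℕ) = (a + n) + 1 := by push_cast; ring
        rw [this, hder_rec _ hpos, ih, Finset.sum_range_succ, add_assoc]
  have hdig : digamma a = deriv f a := by
    rw [hf, Function.comp_def,
      deriv.log (Real.differentiableAt_Gamma (hne ha)) (Real.Gamma_pos_of_pos ha).ne',
      digamma]
  have hc : ConvexOn ℝ (Ioi 0) f := Real.convexOn_log_Gamma
  -- sandwich bounds for n ≥ 1
  have hlow : ∀ n : ℕ, 1 ≤ n → Real.log (a + n - 1) ≤ deriv f (a + n) := by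
    intro n hn
    have h0 : (0 : ℝ) < a + n - 1 := by
      have : (1 : ℝ) ≤ n := by exact_mod_cast hn
      linarith
    have h1 : (0 : ℝ) < a + n := by positivity
    refine (le_of_eq ?_).trans <|
      hc.slope_le_deriv (mem_Ioi.mpr h0) (mem_Ioi.mpr h1) (by linarith) (hder h1)
    rw [slope_def_field, show a + n - (a + n - 1) = (1 : ℝ) by ring, div_one,
      show a + n = (a + n - 1) + 1 by ring, h_rec _ h0]
    ring
  have hup : ∀ n : ℕ, deriv f (a + n) ≤ Real.log (a + n) := by
    intro n
    have h1 : (0 : ℝ) < a + n := by positivity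
    have h2 : (0 : ℝ) < a + n + 1 := by positivity
    refine (hc.deriv_le_slope (mem_Ioi.mpr h1) (mem_Ioi.mpr h2) (by linarith)
      (hder h1)).trans (le_of_eq ?_)
    rw [slope_def_field, show a + n + 1 - (a + n) = (1 : ℝ) by ring, div_one,
      h_rec _ h1]
    ring
  -- the key quantity tends to 0
  have hkey : Tendsto (fun n : ℕ => deriv f (a + n) - Real.log (a + n - 1)) atTop (𝓝 0) := by
    have htop : Tendsto (fun n : ℕ => a + (n : ℝ) - 1) atTop atTop := by
      apply tendsto_atTop_add_const_right
      exact tendsto_atTop_add_const_left _ _ tendsto_natCast_atTop_atTop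
    have hinv : Tendsto (fun n : ℕ => 1 / (a + (n : ℝ) - 1)) atTop (𝓝 0) := by
      simp only [one_div]; exact htop.inv_tendsto_atTop
    have hub : Tendsto (fun n : ℕ => Real.log (a + n) - Real.log (a + n - 1)) atTop (𝓝 0) := by
      have h1 : Tendsto (fun n : ℕ => (a + (n : ℝ)) / (a + n - 1)) atTop (𝓝 1) := by
        have : Tendsto (fun n : ℕ => 1 + 1 / (a + (n : ℝ) - 1)) atTop (𝓝 (1 + 0)) :=
          tendsto_const_nhds.add hinv
        rw [add_zero] at this
        refine this.congr' ?_
        filter_upwards [htop.eventually_gt_atTop 0] with n hn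
        field_simp
        ring
      have := h1.log one_ne_zero
      rw [Real.log_one] at this
      refine this.congr' ?_
      filter_upwards [htop.eventually_gt_atTop 0] with n hn
      have h2 : (0 : ℝ) < a + n := by positivity
      rw [Real.log_div h2.ne' hn.ne']
    refine squeeze_zero' ?_ ?_ hub
    · filter_upwards [eventually_ge_atTop 1] with n hn
      have := hlow n hn; linarith
    · filter_upwards with n
      have := hup n; linarith
  -- conclude
  have hfinal : Tendsto (fun n : ℕ => (deriv f (a + n) - Real.log (a + n - 1))
      + (Real.log a - deriv f a)) atTop (𝓝 (0 + (Real.log a - deriv f a))) :=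
    hkey.add tendsto_const_nhds
  rw [zero_add] at hfinal
  rw [hdig]
  refine hfinal.congr' ?_
  filter_upwards [eventually_ge_atTop 1] with n hn
  have h0 : (0 : ℝ) < a + n - 1 := by
    have : (1 : ℝ) ≤ n := by exact_mod_cast hn
    linarith
  rw [hder_nat n, Real.log_div h0.ne' ha.ne']
  ring
end

section
/- The function f₁(x) = 1/(ln(x) - ψ(x)) - 2x is strictly decreasing on (1, ∞). -/
open Real Filter Topology Set

lemma analyticOnNhd_Gamma : AnalyticOnNhd ℝ Real.Gamma (Set.Ioi 0) := by
  have h1 : AnalyticOnNhd ℂ Complex.Gamma {s : ℂ | 0 < s.re} := by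
    refine DifferentiableOn.analyticOnNhd
      (fun s hs => (Complex.differentiableAt_Gamma s ?_).differentiableWithinAt)
      (isOpen_lt continuous_const Complex.continuous_re)
    intro m hm
    have h0 : (0:ℝ) < s.re := hs
    rw [hm] at h0
    simp only [Complex.neg_re, Complex.natCast_re] at h0
    have : (0:ℝ) ≤ m := Nat.cast_nonneg m
    linarith
  have hg : Real.Gamma = fun x : ℝ => (Complex.Gamma (Complex.ofRealCLM x)).re := by
    funext y
    simp only [Complex.ofRealCLM_apply, Complex.Gamma_ofReal, Complex.ofReal_re]
  rw [hg]
  intro x hx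
  have hA : AnalyticAt ℂ Complex.Gamma (Complex.ofRealCLM x) := by
    apply h1
    simpa using (mem_Ioi.mp hx)
  exact (Complex.reCLM.analyticAt _).comp ((hA.restrictScalars).comp (Complex.ofRealCLM.analyticAt x))

lemma analyticOnNhd_digamma : AnalyticOnNhd ℝ digamma (Set.Ioi 0) := by
  refine AnalyticOnNhd.div analyticOnNhd_Gamma.deriv analyticOnNhd_Gamma ?_
  intro x hx
  exact (Real.Gamma_pos_of_pos (mem_Ioi.mp hx)).ne'

lemma analyticOnNhd_trigamma : AnalyticOnNhd ℝ trigamma (Set.Ioi 0) :=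
  analyticOnNhd_digamma.deriv

lemma hasDerivAt_digamma {x : ℝ} (hx : 0 < x) : HasDerivAt digamma (trigamma x) x :=
  ((analyticOnNhd_digamma x hx).differentiableAt).hasDerivAt

lemma continuousOn_trigamma : ContinuousOn trigamma (Set.Ioi 0) :=
  fun x hx => ((analyticOnNhd_trigamma x hx).continuousAt).continuousWithinAt

lemma hasDerivAt_Gamma' {x : ℝ} (hx : 0 < x) : HasDerivAt Real.Gamma (deriv Real.Gamma x) x :=
  ((analyticOnNhd_Gamma x hx).differentiableAt).hasDerivAt

lemma deriv_Gamma_add_one {x : ℝ} (hx : 0 < x) :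
    deriv Real.Gamma (x + 1) = Real.Gamma x + x * deriv Real.Gamma x := by
  have h1 : HasDerivAt (fun y : ℝ => Real.Gamma (y + 1)) (deriv Real.Gamma (x + 1)) x :=
    (hasDerivAt_Gamma' (by linarith)).comp_add_const
  have h2 : HasDerivAt (fun y : ℝ => y * Real.Gamma y)
      (Real.Gamma x + x * deriv Real.Gamma x) x := by
    have := (hasDerivAt_id x).mul (hasDerivAt_Gamma' hx)
    exact this.congr_deriv (by simp only [id_eq]; ring)
  have heq : (fun y : ℝ => Real.Gamma (y + 1)) =ᶠ[𝓝 x] fun y : ℝ => y * Real.Gamma y := by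
    filter_upwards [eventually_gt_nhds hx] with y hy
    rw [Real.Gamma_add_one hy.ne']
  have := h1.congr_of_eventuallyEq heq.symm
  exact this.unique h2

lemma digamma_add_one {x : ℝ} (hx : 0 < x) : digamma (x + 1) = digamma x + 1 / x := by
  have hG := Real.Gamma_pos_of_pos hx
  unfold digamma
  rw [deriv_Gamma_add_one hx, Real.Gamma_add_one hx.ne']
  field_simp
  ring

lemma trigamma_add_one {x : ℝ} (hx : 0 < x) :
    trigamma (x + 1) = trigamma x - 1 / x ^ 2 := by
  have h1 : HasDerivAt (fun y : ℝ => digamma (y + 1)) (trigamma (x + 1)) x :=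
    (hasDerivAt_digamma (by linarith)).comp_add_const
  have h2 : HasDerivAt (fun y : ℝ => digamma y + 1 / y)
      (trigamma x - 1 / x ^ 2) x := by
    have hx' : HasDerivAt (fun y : ℝ => 1 / y) (-(1 / x ^ 2)) x := by
      simpa [one_div] using (hasDerivAt_inv hx.ne')
    have := (hasDerivAt_digamma hx).add hx'
    exact this.congr_deriv (by ring)
  have heq : (fun y : ℝ => digamma (y + 1)) =ᶠ[𝓝 x] fun y : ℝ => digamma y + 1 / y := by
    filter_upwards [eventually_gt_nhds hx] with y hy
    exact digamma_add_one hy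
  exact (h1.congr_of_eventuallyEq heq.symm).unique h2
-- Section C: convexity consequences
lemma hasDerivAt_log_Gamma {x : ℝ} (hx : 0 < x) :
    HasDerivAt (Real.log ∘ Real.Gamma) (digamma x) x :=
  (hasDerivAt_Gamma' hx).log (Real.Gamma_pos_of_pos hx).ne'

lemma digamma_le_log {x : ℝ} (hx : 0 < x) : digamma x ≤ Real.log x := by
  have hc := Real.convexOn_log_Gamma
  have h := hc.deriv_le_slope (mem_Ioi.mpr hx) (mem_Ioi.mpr (by linarith : (0:ℝ) < x + 1))
    (by linarith) (hasDerivAt_log_Gamma hx).differentiableAt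
  rw [(hasDerivAt_log_Gamma hx).deriv] at h
  refine h.trans (le_of_eq ?_)
  rw [slope_def_field, show x + 1 - x = (1:ℝ) by ring, div_one]
  simp only [Function.comp_apply]
  rw [Real.Gamma_add_one hx.ne', Real.log_mul hx.ne' (Real.Gamma_pos_of_pos hx).ne']
  ring

lemma log_le_digamma_add_one {x : ℝ} (hx : 0 < x) : Real.log x ≤ digamma (x + 1) := by
  have hc := Real.convexOn_log_Gamma
  have h := hc.slope_le_deriv (mem_Ioi.mpr hx) (mem_Ioi.mpr (by linarith : (0:ℝ) < x + 1))
    (by linarith) (hasDerivAt_log_Gamma (by linarith : (0:ℝ) < x + 1)).differentiableAt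
  rw [(hasDerivAt_log_Gamma (by linarith : (0:ℝ) < x + 1)).deriv] at h
  refine le_trans (le_of_eq ?_) h
  rw [slope_def_field, show x + 1 - x = (1:ℝ) by ring, div_one]
  simp only [Function.comp_apply]
  rw [Real.Gamma_add_one hx.ne', Real.log_mul hx.ne' (Real.Gamma_pos_of_pos hx).ne']
  ring

lemma digamma_monotoneOn {u v : ℝ} (hu : 0 < u) (huv : u ≤ v) : digamma u ≤ digamma v := by
  rcases eq_or_lt_of_le huv with rfl | huv
  · exact le_refl _
  have hv : 0 < v := lt_trans hu huv
  have hc := Real.convexOn_log_Gamma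
  have h1 := hc.deriv_le_slope (mem_Ioi.mpr hu) (mem_Ioi.mpr hv) huv
    (hasDerivAt_log_Gamma hu).differentiableAt
  have h2 := hc.slope_le_deriv (mem_Ioi.mpr hu) (mem_Ioi.mpr hv) huv
    (hasDerivAt_log_Gamma hv).differentiableAt
  rw [(hasDerivAt_log_Gamma hu).deriv] at h1
  rw [(hasDerivAt_log_Gamma hv).deriv] at h2
  exact h1.trans h2

lemma trigamma_nonneg {x : ℝ} (hx : 0 < x) : 0 ≤ trigamma x := by
  have hd := hasDerivAt_digamma hx
  have ht : Filter.Tendsto (slope digamma x) (𝓝[>] x) (𝓝 (trigamma x)) :=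
    ((hasDerivAt_iff_tendsto_slope.mp hd)).mono_left
      (nhdsWithin_mono x (fun y hy => ne_of_gt hy))
  refine ge_of_tendsto ht ?_
  filter_upwards [self_mem_nhdsWithin] with y hy
  have hyx : x < y := hy
  rw [slope_def_field]
  apply div_nonneg
  · have := digamma_monotoneOn hx (le_of_lt hyx)
    linarith
  · linarith
-- Section D: L and T functions
noncomputable def Lf (x : ℝ) : ℝ := Real.log x - digamma x
noncomputable def Tf (x : ℝ) : ℝ := trigamma x - 1 / x
noncomputable def af (x : ℝ) : ℝ := 1 / x - Real.log (1 + 1 / x)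
noncomputable def gf (x : ℝ) : ℝ := 1 / (x ^ 2 * (x + 1))

lemma Lf_nonneg {x : ℝ} (hx : 0 < x) : 0 ≤ Lf x :=
  sub_nonneg.mpr (digamma_le_log hx)

lemma Lf_le {x : ℝ} (hx : 0 < x) : Lf x ≤ 1 / x := by
  have h := log_le_digamma_add_one hx
  rw [digamma_add_one hx] at h
  unfold Lf; linarith

lemma log_one_add_inv {x : ℝ} (hx : 0 < x) :
    Real.log (1 + 1 / x) = Real.log (x + 1) - Real.log x := by
  rw [show (1 : ℝ) + 1 / x = (x + 1) / x by field_simp]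
  exact Real.log_div (by linarith) hx.ne'

lemma Lf_rec {x : ℝ} (hx : 0 < x) : Lf x - Lf (x + 1) = af x := by
  unfold Lf af
  rw [digamma_add_one hx, log_one_add_inv hx]
  ring

lemma Tf_rec {x : ℝ} (hx : 0 < x) : Tf x - Tf (x + 1) = gf x := by
  unfold Tf gf
  rw [trigamma_add_one hx]
  field_simp
  ring

lemma gf_nonneg {x : ℝ} (hx : 0 < x) : 0 ≤ gf x := by
  unfold gf; positivity

lemma Tf_ge {x : ℝ} (hx : 0 < x) : -(1 / x) ≤ Tf x := by
  unfold Tf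
  have := trigamma_nonneg hx
  linarith

lemma sum_gf {x : ℝ} (hx : 0 < x) (N : ℕ) :
    ∑ i ∈ Finset.range N, gf (x + i) = Tf x - Tf (x + N) := by
  induction N with
  | zero => simp
  | succ n ih =>
    rw [Finset.sum_range_succ, ih]
    have hxn : (0:ℝ) < x + n := by positivity
    have := Tf_rec hxn
    have harg : x + (n:ℝ) + 1 = x + (n + 1 : ℕ) := by push_cast; ring
    rw [← harg]
    linarith

lemma sum_af {x : ℝ} (hx : 0 < x) (N : ℕ) :
    ∑ i ∈ Finset.range N, af (x + i) = Lf x - Lf (x + N) := by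
  induction N with
  | zero => simp
  | succ n ih =>
    rw [Finset.sum_range_succ, ih]
    have hxn : (0:ℝ) < x + n := by positivity
    have := Lf_rec hxn
    have harg : x + (n:ℝ) + 1 = x + (n + 1 : ℕ) := by push_cast; ring
    rw [← harg]
    linarith

lemma tendsto_add_nat_atTop (x : ℝ) :
    Filter.Tendsto (fun N : ℕ => x + (N:ℝ)) atTop atTop :=
  tendsto_atTop_add_const_left _ x tendsto_natCast_atTop_atTop

lemma tendsto_one_div_add_nat (x : ℝ) :
    Filter.Tendsto (fun N : ℕ => 1 / (x + (N:ℝ))) atTop (𝓝 0) := by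
  simp only [one_div]
  exact (tendsto_add_nat_atTop x).inv_tendsto_atTop

lemma tendsto_Lf_add_atTop {x : ℝ} (hx : 0 < x) :
    Filter.Tendsto (fun N : ℕ => Lf (x + N)) atTop (𝓝 0) := by
  refine squeeze_zero (fun N => Lf_nonneg (by positivity)) (fun N => Lf_le (by positivity)) ?_
  exact tendsto_one_div_add_nat x

lemma tendsto_af_add_atTop {x : ℝ} (hx : 0 < x) :
    Filter.Tendsto (fun N : ℕ => af (x + N)) atTop (𝓝 0) := by
  have h1 : Filter.Tendsto (fun N : ℕ => Real.log (1 + 1 / (x + N))) atTop (𝓝 0) := by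
    have : Filter.Tendsto (fun N : ℕ => 1 + 1 / (x + (N:ℝ))) atTop (𝓝 1) := by
      simpa using (tendsto_const_nhds (x := (1:ℝ)) (f := atTop)).add (tendsto_one_div_add_nat x)
    simpa [Function.comp_def] using (Real.continuousAt_log (by norm_num : (1:ℝ) ≠ 0)).tendsto.comp this
  have h2 := (tendsto_one_div_add_nat x).sub h1
  simpa [af] using h2
-- Section E: the limit of Tf at infinity is zero
noncomputable def Gf (y : ℝ) : ℝ := ∑' n : ℕ, gf (y + n)
noncomputable def Lam (y : ℝ) : ℝ := Tf y - Gf y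

lemma continuousOn_Tf : ContinuousOn Tf (Set.Ioi 0) := by
  apply continuousOn_trigamma.sub
  exact continuousOn_const.div continuousOn_id (fun x hx => ne_of_gt hx)

lemma summable_gf {y : ℝ} (hy : 0 < y) : Summable (fun n : ℕ => gf (y + n)) := by
  apply summable_of_sum_range_le (c := Tf y + 1 / y)
  · intro n; exact gf_nonneg (by positivity)
  · intro n
    rw [sum_gf hy]
    have h1 : -(1 / (y + n)) ≤ Tf (y + n) := Tf_ge (by positivity)
    have h2 : 1 / (y + n) ≤ 1 / y := by
      apply one_div_le_one_div_of_le hy; simp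
    linarith

lemma tendsto_Tf_add_lam {y : ℝ} (hy : 0 < y) :
    Filter.Tendsto (fun N : ℕ => Tf (y + N)) atTop (𝓝 (Lam y)) := by
  have hs := (summable_gf hy).hasSum.tendsto_sum_nat
  have h2 : Filter.Tendsto (fun N : ℕ => Tf y - ∑ i ∈ Finset.range N, gf (y + i))
      atTop (𝓝 (Tf y - Gf y)) := tendsto_const_nhds.sub hs
  refine h2.congr (fun N => ?_)
  rw [sum_gf hy]
  ring

lemma lam_nonneg {y : ℝ} (hy : 0 < y) : 0 ≤ Lam y := by
  have h0 : Filter.Tendsto (fun N : ℕ => -(1 / (y + (N:ℝ)))) atTop (𝓝 0) := by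
    simpa using (tendsto_one_div_add_nat y).neg
  exact le_of_tendsto_of_tendsto' h0 (tendsto_Tf_add_lam hy)
    (fun N => Tf_ge (by positivity))

lemma continuousOn_Gf : ContinuousOn Gf (Set.Ici 1) := by
  have hu : Summable (fun n : ℕ => 1 / ((n : ℝ) + 1) ^ 2) := by
    have h := Real.summable_one_div_nat_pow.mpr (by norm_num : 1 < 2)
    have := (summable_nat_add_iff (f := fun n : ℕ => 1 / (n : ℝ) ^ 2) 1).mpr h
    refine this.congr (fun n => ?_)
    push_cast; ring_nf
  refine (tendstoUniformlyOn_tsum hu ?_).continuousOn ?_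
  · intro n y hy
    have h1 : (1:ℝ) ≤ y := hy
    have hpos : (0:ℝ) < y + n := by positivity
    rw [Real.norm_eq_abs, abs_of_nonneg (gf_nonneg hpos)]
    unfold gf
    rw [div_le_div_iff₀ (by positivity) (by positivity)]
    have hn1 : ((n:ℝ) + 1) ≤ y + n := by linarith
    have h2 : ((n:ℝ) + 1) ^ 2 ≤ (y + n) ^ 2 := by nlinarith
    nlinarith [sq_nonneg ((n:ℝ)+1)]
  · refine Filter.Frequently.of_forall (fun t => ?_)
    apply continuousOn_finset_sum
    intro i _
    apply ContinuousOn.div continuousOn_const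
    · fun_prop
    · intro y hy
      have h1 : (1:ℝ) ≤ y := hy
      positivity

lemma continuousOn_lam : ContinuousOn Lam (Set.Ici 1) := by
  apply ContinuousOn.sub
  · exact continuousOn_Tf.mono (fun y hy => Set.mem_Ioi.mpr (lt_of_lt_of_le zero_lt_one hy))
  · exact continuousOn_Gf

lemma integral_Tf {z : ℝ} (hz : 0 < z) : (∫ y in z..(z + 1), Tf y) = af z := by
  have hsub : Set.uIcc z (z + 1) ⊆ Set.Ioi 0 := by
    rw [Set.uIcc_of_le (by linarith)]
    intro y hy
    exact lt_of_lt_of_le hz hy.1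
  have hderiv : ∀ y ∈ Set.uIcc z (z + 1),
      HasDerivAt (fun u => digamma u - Real.log u) (Tf y) y := by
    intro y hy
    have hy0 : 0 < y := hsub hy
    have := (hasDerivAt_digamma hy0).sub (Real.hasDerivAt_log hy0.ne')
    exact this.congr_deriv (by simp only [Tf, one_div])
  have hint : IntervalIntegrable Tf MeasureTheory.volume z (z + 1) :=
    (continuousOn_Tf.mono hsub).intervalIntegrable
  rw [intervalIntegral.integral_eq_sub_of_hasDerivAt hderiv hint]
  rw [digamma_add_one hz]
  unfold af
  rw [log_one_add_inv hz]
  ring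

lemma integral_Tf_shift {x : ℝ} (hx : 0 < x) (N : ℕ) :
    (∫ y in x..(x + 1), Tf (y + N)) = af (x + N) := by
  rw [intervalIntegral.integral_comp_add_right (fun y => Tf y) (N : ℝ)]
  have h : x + 1 + (N:ℝ) = (x + N) + 1 := by ring
  rw [h]
  exact integral_Tf (by positivity)

lemma integral_lam_zero {x : ℝ} (hx : 1 ≤ x) :
    (∫ y in Set.Ioc x (x + 1), Lam y) = 0 := by
  have hx0 : (0:ℝ) < x := lt_of_lt_of_le one_pos hx
  have hIcc : Set.Icc x (x + 1) ⊆ Set.Ici (1:ℝ) := fun y hy => le_trans hx hy.1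
  have hIccIoi : ∀ y ∈ Set.Icc x (x + 1), (0:ℝ) < y :=
    fun y hy => lt_of_lt_of_le zero_lt_one (hIcc hy)
  have hfint : ∀ N : ℕ, MeasureTheory.IntegrableOn (fun y => Tf (y + N))
      (Set.Ioc x (x + 1)) MeasureTheory.volume := by
    intro N
    apply MeasureTheory.IntegrableOn.mono_set _ Set.Ioc_subset_Icc_self
    apply ContinuousOn.integrableOn_Icc
    have hmaps : Set.MapsTo (fun y : ℝ => y + (N:ℝ)) (Set.Icc x (x + 1)) (Set.Ioi 0) := by
      intro y hy
      have h1 : (0:ℝ) < y := hIccIoi y hy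
      simp only [Set.mem_Ioi]
      positivity
    exact continuousOn_Tf.comp
      (Continuous.continuousOn (by fun_prop)) hmaps
  have hlamint : MeasureTheory.IntegrableOn Lam (Set.Ioc x (x + 1)) MeasureTheory.volume :=
    ((continuousOn_lam.mono hIcc).integrableOn_Icc).mono_set Set.Ioc_subset_Icc_self
  have hmono : ∀ᵐ y ∂(MeasureTheory.volume.restrict (Set.Ioc x (x + 1))),
      Antitone fun N : ℕ => Tf (y + N) := by
    refine MeasureTheory.ae_restrict_of_forall_mem measurableSet_Ioc ?_
    intro y hy
    apply antitone_nat_of_succ_le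
    intro N
    have hy0 : (0:ℝ) < y := lt_trans hx0 hy.1
    have hpos : (0:ℝ) < y + N := by positivity
    have hrec := Tf_rec hpos
    have hg := gf_nonneg hpos
    have hcast : y + ((N:ℕ) + 1 : ℕ) = (y + N) + 1 := by push_cast; ring
    rw [hcast]
    linarith
  have htd : ∀ᵐ y ∂(MeasureTheory.volume.restrict (Set.Ioc x (x + 1))),
      Filter.Tendsto (fun N : ℕ => Tf (y + N)) atTop (𝓝 (Lam y)) := by
    refine MeasureTheory.ae_restrict_of_forall_mem measurableSet_Ioc ?_
    intro y hy
    exact tendsto_Tf_add_lam (lt_trans hx0 hy.1)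
  have hconv := MeasureTheory.integral_tendsto_of_tendsto_of_antitone hfint hlamint hmono htd
  have hleft : ∀ N : ℕ, (∫ y in Set.Ioc x (x + 1), Tf (y + N)) = af (x + N) := by
    intro N
    rw [← intervalIntegral.integral_of_le (by linarith : x ≤ x + 1)]
    exact integral_Tf_shift hx0 N
  have hconv2 : Filter.Tendsto (fun N : ℕ => af (x + N)) atTop
      (𝓝 (∫ y in Set.Ioc x (x + 1), Lam y)) := by
    refine hconv.congr (fun N => hleft N)
  exact tendsto_nhds_unique hconv2 (tendsto_af_add_atTop hx0)

lemma lam_eq_zero {x : ℝ} (hx : 1 ≤ x) : Lam x = 0 := by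
  by_contra hne
  have hx0 : (0:ℝ) < x := lt_of_lt_of_le one_pos hx
  have hpos : 0 < Lam x := lt_of_le_of_ne (lam_nonneg hx0) (Ne.symm hne)
  -- continuity within Ici 1 at x gives a right neighborhood where Lam > Lam x / 2
  have hcw : ContinuousWithinAt Lam (Set.Ici 1) x := continuousOn_lam x hx
  have hev : ∀ᶠ y in 𝓝[Set.Ici 1] x, Lam x / 2 < Lam y :=
    hcw.eventually_const_lt (by linarith)
  rw [Filter.eventually_iff] at hev
  obtain ⟨ε, hε, hball⟩ := Metric.mem_nhdsWithin_iff.mp hev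
  set δ := min (ε / 2) 1 with hδdef
  have hδ : 0 < δ := by positivity
  have hδ1 : δ ≤ 1 := min_le_right _ _
  have hsub : Set.Ioc x (x + δ) ⊆ Set.Ioc x (x + 1) :=
    Set.Ioc_subset_Ioc_right (by linarith)
  have hlamint : MeasureTheory.IntegrableOn Lam (Set.Ioc x (x + 1)) MeasureTheory.volume :=
    ((continuousOn_lam.mono (fun y hy => le_trans hx hy.1)).integrableOn_Icc).mono_set
      Set.Ioc_subset_Icc_self
  have hnonneg : ∀ y ∈ Set.Ioc x (x + 1), 0 ≤ Lam y :=
    fun y hy => lam_nonneg (lt_trans hx0 hy.1)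
  have hgt : ∀ y ∈ Set.Ioc x (x + δ), Lam x / 2 ≤ Lam y := by
    intro y hy
    apply le_of_lt
    have hmem : y ∈ Metric.ball x ε ∩ Set.Ici 1 := by
      constructor
      · rw [Metric.mem_ball, Real.dist_eq, abs_of_nonneg (by linarith [hy.1.le] : (0:ℝ) ≤ y - x)]
        have := hy.2
        have hd2 : δ ≤ ε / 2 := min_le_left _ _
        linarith
      · exact le_trans hx hy.1.le
    exact hball hmem
  have hlow : Lam x / 2 * (MeasureTheory.volume (Set.Ioc x (x + δ))).toReal ≤
      ∫ y in Set.Ioc x (x + δ), Lam y := by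
    rw [mul_comm, ← smul_eq_mul, ← MeasureTheory.measureReal_def]
    apply MeasureTheory.setIntegral_ge_of_const_le measurableSet_Ioc
    · exact (measure_Ioc_lt_top).ne
    · exact hgt
    · exact hlamint.mono_set hsub
  have hvol : (MeasureTheory.volume (Set.Ioc x (x + δ))).toReal = δ := by
    rw [Real.volume_Ioc]
    simp [hδ.le]
  have hmonoI : (∫ y in Set.Ioc x (x + δ), Lam y) ≤ ∫ y in Set.Ioc x (x + 1), Lam y := by
    apply MeasureTheory.setIntegral_mono_set hlamint
    · refine MeasureTheory.ae_restrict_of_forall_mem measurableSet_Ioc hnonneg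
    · exact HasSubset.Subset.eventuallyLE hsub
  rw [integral_lam_zero hx] at hmonoI
  rw [hvol] at hlow
  nlinarith

lemma tendsto_Tf_zero {x : ℝ} (hx : 1 ≤ x) :
    Filter.Tendsto (fun N : ℕ => Tf (x + N)) atTop (𝓝 0) := by
  have := tendsto_Tf_add_lam (lt_of_lt_of_le one_pos hx)
  rwa [lam_eq_zero hx] at this
-- Section F: explicit rational bounds
noncomputable def Hnp (t : ℝ) : ℝ := ((1065964013/300000):ℝ) + (1198890541/157500)*t + (128293103/18000)*t^2 + (10642799/3000)*t^3 + (40273/40)*t^4 + (490/3)*t^5 + (169/12)*t^6 + (1/2)*t^7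
noncomputable def Dhp (t : ℝ) : ℝ := (t*(t+1)*(t+2)*(t+3)*(t+4)*(t+5)*(t+6)*(t+7))
noncomputable def Rnp (t : ℝ) : ℝ := ((38320128):ℝ) + (83953440)*t + (7127566252/77)*t^2 + (2107274752/35)*t^3 + (378138788/15)*t^4 + (99515823/14)*t^5 + (19295995/14)*t^6 + (1841543/10)*t^7 + (83279/5)*t^8 + (1947/2)*t^9 + (199/6)*t^10 + (1/2)*t^11
noncomputable def Drp (t : ℝ) : ℝ := (t^2*(t+1)*(t+2)*(t+3)*(t+4)*(t+5)*(t+6)*(t+7)*(t+8)*(t+9)*(t+10)*(t+11))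
noncomputable def hb (t : ℝ) : ℝ := Hnp t / Dhp t
noncomputable def rb (t : ℝ) : ℝ := Rnp t / Drp t
noncomputable def Wf (t : ℝ) : ℝ := (15*t + 8) / (3*t*(10*t^2 + 12*t + 3))

lemma Hnp_pos {t : ℝ} (ht : 1 ≤ t) : 0 < Hnp t := by
  have h0 : (0:ℝ) ≤ t - 1 := by linarith
  unfold Hnp
  nlinarith [pow_nonneg h0 1, pow_nonneg h0 2, pow_nonneg h0 3, pow_nonneg h0 4, pow_nonneg h0 5, pow_nonneg h0 6, pow_nonneg h0 7]

lemma Rnp_pos {t : ℝ} (ht : 1 ≤ t) : 0 < Rnp t := by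
  have h0 : (0:ℝ) ≤ t - 1 := by linarith
  unfold Rnp
  nlinarith [pow_nonneg h0 1, pow_nonneg h0 2, pow_nonneg h0 3, pow_nonneg h0 4, pow_nonneg h0 5, pow_nonneg h0 6, pow_nonneg h0 7, pow_nonneg h0 8, pow_nonneg h0 9, pow_nonneg h0 10, pow_nonneg h0 11]

lemma Dhp_pos {t : ℝ} (ht : 1 ≤ t) : 0 < Dhp t := by
  have ht0 : (0:ℝ) < t := by linarith
  unfold Dhp; positivity

lemma Drp_pos {t : ℝ} (ht : 1 ≤ t) : 0 < Drp t := by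
  have ht0 : (0:ℝ) < t := by linarith
  unfold Drp; positivity

lemma hb_pos {t : ℝ} (ht : 1 ≤ t) : 0 < hb t :=
  div_pos (Hnp_pos ht) (Dhp_pos ht)

lemma rb_nonneg {t : ℝ} (ht : 1 ≤ t) : 0 ≤ rb t :=
  le_of_lt (div_pos (Rnp_pos ht) (Drp_pos ht))

lemma hb_le {t : ℝ} (ht : 1 ≤ t) : hb t ≤ 1 / t := by
  have h0 : (0:ℝ) ≤ t - 1 := by linarith
  have ht0 : (0:ℝ) < t := by linarith
  unfold hb
  rw [div_le_div_iff₀ (Dhp_pos ht) ht0]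
  unfold Hnp Dhp
  nlinarith [pow_nonneg h0 1, pow_nonneg h0 2, pow_nonneg h0 3, pow_nonneg h0 4, pow_nonneg h0 5, pow_nonneg h0 6, pow_nonneg h0 7, pow_nonneg h0 8]

lemma rb_le {t : ℝ} (ht : 1 ≤ t) : rb t ≤ 1 / t := by
  have h0 : (0:ℝ) ≤ t - 1 := by linarith
  have ht0 : (0:ℝ) < t := by linarith
  unfold rb
  rw [div_le_div_iff₀ (Drp_pos ht) ht0]
  unfold Rnp Drp
  nlinarith [pow_nonneg h0 1, pow_nonneg h0 2, pow_nonneg h0 3, pow_nonneg h0 4, pow_nonneg h0 5, pow_nonneg h0 6, pow_nonneg h0 7, pow_nonneg h0 8, pow_nonneg h0 9, pow_nonneg h0 10, pow_nonneg h0 11, pow_nonneg h0 12, pow_nonneg h0 13]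

lemma hb_step {t : ℝ} (ht : 1 ≤ t) : hb t - hb (t + 1) ≤ Wf t := by
  have h0 : (0:ℝ) ≤ t - 1 := by linarith
  have ht0 : (0:ℝ) < t := by linarith
  have hd1 : 0 < Dhp t := Dhp_pos ht
  have hd2 : 0 < Dhp (t + 1) := Dhp_pos (by linarith)
  unfold hb Wf
  rw [div_sub_div _ _ (ne_of_gt hd1) (ne_of_gt hd2),
    div_le_div_iff₀ (by positivity) (by positivity)]
  unfold Hnp Dhp
  nlinarith [pow_nonneg h0 1, pow_nonneg h0 2, pow_nonneg h0 3, pow_nonneg h0 4, pow_nonneg h0 5, pow_nonneg h0 6, pow_nonneg h0 7, pow_nonneg h0 8, pow_nonneg h0 9]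

lemma rb_step {t : ℝ} (ht : 1 ≤ t) : gf t ≤ rb t - rb (t + 1) := by
  have h0 : (0:ℝ) ≤ t - 1 := by linarith
  have ht0 : (0:ℝ) < t := by linarith
  have hd1 : 0 < Drp t := Drp_pos ht
  have hd2 : 0 < Drp (t + 1) := Drp_pos (by linarith)
  unfold rb gf
  rw [div_sub_div _ _ (ne_of_gt hd1) (ne_of_gt hd2),
    div_le_div_iff₀ (by positivity) (by positivity)]
  unfold Rnp Drp
  nlinarith [pow_nonneg h0 1, pow_nonneg h0 2, pow_nonneg h0 3, pow_nonneg h0 4, pow_nonneg h0 5, pow_nonneg h0 6, pow_nonneg h0 7, pow_nonneg h0 8, pow_nonneg h0 9, pow_nonneg h0 10, pow_nonneg h0 11, pow_nonneg h0 12, pow_nonneg h0 13, pow_nonneg h0 14, pow_nonneg h0 15]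

lemma q3_ineq {t : ℝ} (ht : 1 ≤ t) : rb t < 2 * hb t ^ 2 := by
  have h0 : (0:ℝ) ≤ t - 1 := by linarith
  have ht0 : (0:ℝ) < t := by linarith
  have hd1 : 0 < Drp t := Drp_pos ht
  have hd2 : 0 < Dhp t := Dhp_pos ht
  unfold rb hb
  rw [div_pow, ← mul_div_assoc, div_lt_div_iff₀ hd1 (by positivity)]
  unfold Rnp Drp Hnp Dhp
  nlinarith [pow_nonneg h0 1, pow_nonneg h0 2, pow_nonneg h0 3, pow_nonneg h0 4, pow_nonneg h0 5, pow_nonneg h0 6, pow_nonneg h0 7, pow_nonneg h0 8, pow_nonneg h0 9, pow_nonneg h0 10, pow_nonneg h0 11, pow_nonneg h0 12, pow_nonneg h0 13, pow_nonneg h0 14, pow_nonneg h0 15, pow_nonneg h0 16, pow_nonneg h0 17, pow_nonneg h0 18, pow_nonneg h0 19, pow_nonneg h0 20, pow_nonneg h0 21, pow_nonneg h0 22, pow_nonneg h0 23, pow_nonneg h0 24, pow_nonneg h0 25]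
-- Section G: the Pade bound for log, and af >= Wf
lemma log_pade {u : ℝ} (hu : 0 ≤ u) :
    Real.log (1 + u) ≤ (u + 7/10*u^2 + 1/30*u^3) / (1 + 6/5*u + 3/10*u^2) := by
  set G : ℝ → ℝ := fun v => (v + 7/10*v^2 + 1/30*v^3) / (1 + 6/5*v + 3/10*v^2)
    - Real.log (1 + v) with hG
  have key : ∀ v : ℝ, 0 ≤ v → G 0 ≤ G v := by
    have hmono : MonotoneOn G (Set.Ici 0) := by
      apply monotoneOn_of_deriv_nonneg (convex_Ici 0)
      · apply ContinuousOn.sub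
        · apply ContinuousOn.div (by fun_prop) (by fun_prop)
          intro v hv
          have : (0:ℝ) ≤ v := hv
          positivity
        · apply ContinuousOn.log (by fun_prop)
          intro v hv
          have : (0:ℝ) ≤ v := hv
          positivity
      · intro v hv
        rw [interior_Ici] at hv
        have hv0 : (0:ℝ) < v := hv
        apply DifferentiableAt.differentiableWithinAt
        apply DifferentiableAt.sub
        · apply DifferentiableAt.div (by fun_prop) (by fun_prop)
          positivity
        · exact (Real.differentiableAt_log (by positivity)).comp v (by fun_prop)
      · intro v hv
        rw [interior_Ici] at hv
        have hv0 : (0:ℝ) < v := hv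
        have hDpos : (0:ℝ) < 1 + 6/5*v + 3/10*v^2 := by positivity
        have hN : HasDerivAt (fun w : ℝ => w + 7/10*w^2 + 1/30*w^3)
            (1 + 7/10*(2*v) + 1/30*(3*v^2)) v := by
          have h1 := hasDerivAt_id v
          have h2 := (hasDerivAt_pow 2 v).const_mul (7/10 : ℝ)
          have h3 := (hasDerivAt_pow 3 v).const_mul (1/30 : ℝ)
          exact ((h1.add h2).add h3).congr_deriv (by norm_num)
        have hD : HasDerivAt (fun w : ℝ => 1 + 6/5*w + 3/10*w^2)
            (6/5 + 3/10*(2*v)) v := by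
          have h1 := (hasDerivAt_id v).const_mul (6/5 : ℝ)
          have h2 := (hasDerivAt_pow 2 v).const_mul (3/10 : ℝ)
          refine (((h1.add h2).const_add 1).congr_deriv (by norm_num)).congr_of_eventuallyEq
            (Filter.Eventually.of_forall fun w => ?_)
          simp only [id_eq, Pi.add_apply]
          ring
        have hlog : HasDerivAt (fun w : ℝ => Real.log (1 + w)) (1 / (1 + v)) v := by
          have h1 : HasDerivAt (fun w : ℝ => 1 + w) 1 v := (hasDerivAt_id v).const_add 1
          have := h1.log (by positivity : (1:ℝ) + v ≠ 0)
          simpa using this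
        have hGd : HasDerivAt G
            (((1 + 7/10*(2*v) + 1/30*(3*v^2)) * (1 + 6/5*v + 3/10*v^2)
              - (v + 7/10*v^2 + 1/30*v^3) * (6/5 + 3/10*(2*v))) / (1 + 6/5*v + 3/10*v^2)^2
              - 1 / (1 + v)) v := (hN.div hD (ne_of_gt hDpos)).sub hlog
        rw [hGd.deriv]
        rw [sub_nonneg, div_le_div_iff₀ (by positivity) (by positivity)]
        nlinarith [pow_nonneg hv0.le 5, pow_nonneg hv0.le 4, pow_nonneg hv0.le 3,
          pow_nonneg hv0.le 2, hv0.le]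
    intro v hv
    exact hmono (by simp) hv hv
  have h := key u hu
  have hG0 : G 0 = 0 := by simp [hG]
  rw [hG0] at h
  simp only [hG] at h
  linarith

lemma af_ge_Wf {t : ℝ} (ht : 1 ≤ t) : Wf t ≤ af t := by
  have ht0 : (0:ℝ) < t := by linarith
  have hu : (0:ℝ) ≤ 1 / t := by positivity
  have hlog := log_pade hu
  have hident : (1/t + 7/10*(1/t)^2 + 1/30*(1/t)^3) / (1 + 6/5*(1/t) + 3/10*(1/t)^2)
      = 1 / t - Wf t := by
    unfold Wf
    field_simp
    ring
  rw [hident] at hlog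
  unfold af
  linarith

-- Section H: L >= hb and T <= rb
lemma Lf_ge_hb {x : ℝ} (hx : 1 ≤ x) : hb x ≤ Lf x := by
  have hx0 : (0:ℝ) < x := by linarith
  have key : ∀ N : ℕ, hb x - hb (x + N) ≤ Lf x - Lf (x + N) := by
    intro N
    induction N with
    | zero => simp
    | succ n ih =>
      have hxn : (1:ℝ) ≤ x + n := by
        have : (0:ℝ) ≤ (n:ℝ) := Nat.cast_nonneg n
        linarith
      have h1 : hb (x + n) - hb ((x + n) + 1) ≤ Wf (x + n) := hb_step hxn
      have h2 : Wf (x + n) ≤ af (x + n) := af_ge_Wf hxn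
      have h3 : Lf (x + n) - Lf ((x + n) + 1) = af (x + n) := Lf_rec (by linarith)
      have hcast : x + ((n:ℕ) + 1 : ℕ) = (x + n) + 1 := by push_cast; ring
      rw [hcast]
      linarith
  have h1 : Filter.Tendsto (fun N : ℕ => hb x - hb (x + N)) atTop (𝓝 (hb x)) := by
    have hhb0 : Filter.Tendsto (fun N : ℕ => hb (x + N)) atTop (𝓝 0) := by
      refine squeeze_zero (fun N => (hb_pos (by
        have : (0:ℝ) ≤ (N:ℝ) := Nat.cast_nonneg N
        linarith)).le) (fun N => hb_le (by
        have : (0:ℝ) ≤ (N:ℝ) := Nat.cast_nonneg N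
        linarith)) (tendsto_one_div_add_nat x)
    simpa using tendsto_const_nhds.sub hhb0
  have h2 : Filter.Tendsto (fun N : ℕ => Lf x - Lf (x + N)) atTop (𝓝 (Lf x)) := by
    simpa using tendsto_const_nhds.sub (tendsto_Lf_add_atTop hx0)
  exact le_of_tendsto_of_tendsto' h1 h2 key

lemma Tf_le_rb {x : ℝ} (hx : 1 ≤ x) : Tf x ≤ rb x := by
  have hx0 : (0:ℝ) < x := by linarith
  have key : ∀ N : ℕ, Tf x - Tf (x + N) ≤ rb x - rb (x + N) := by
    intro N
    induction N with
    | zero => simp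
    | succ n ih =>
      have hxn : (1:ℝ) ≤ x + n := by
        have : (0:ℝ) ≤ (n:ℝ) := Nat.cast_nonneg n
        linarith
      have h1 : gf (x + n) ≤ rb (x + n) - rb ((x + n) + 1) := rb_step hxn
      have h3 : Tf (x + n) - Tf ((x + n) + 1) = gf (x + n) := Tf_rec (by linarith)
      have hcast : x + ((n:ℕ) + 1 : ℕ) = (x + n) + 1 := by push_cast; ring
      rw [hcast]
      linarith
  have h1 : Filter.Tendsto (fun N : ℕ => Tf x - Tf (x + N)) atTop (𝓝 (Tf x)) := by
    simpa using tendsto_const_nhds.sub (tendsto_Tf_zero hx)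
  have h2 : Filter.Tendsto (fun N : ℕ => rb x - rb (x + N)) atTop (𝓝 (rb x)) := by
    have hrb0 : Filter.Tendsto (fun N : ℕ => rb (x + N)) atTop (𝓝 0) := by
      refine squeeze_zero (fun N => rb_nonneg (by
        have : (0:ℝ) ≤ (N:ℝ) := Nat.cast_nonneg N
        linarith)) (fun N => rb_le (by
        have : (0:ℝ) ≤ (N:ℝ) := Nat.cast_nonneg N
        linarith)) (tendsto_one_div_add_nat x)
    simpa using tendsto_const_nhds.sub hrb0
  exact le_of_tendsto_of_tendsto' h1 h2 key
-- Final assembly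
theorem f1_strictAnti :
    StrictAntiOn (fun x : ℝ => 1 / (Real.log x - digamma x) - 2 * x) (Set.Ioi 1) := by
  have hLpos : ∀ x : ℝ, 1 < x → 0 < Lf x := fun x hx =>
    lt_of_lt_of_le (hb_pos hx.le) (Lf_ge_hb hx.le)
  have hderiv : ∀ x ∈ Set.Ioi (1:ℝ),
      HasDerivAt (fun x : ℝ => 1 / (Real.log x - digamma x) - 2 * x)
      (Tf x / (Lf x) ^ 2 - 2) x := by
    intro x hx
    have hx1 : (1:ℝ) < x := hx
    have hx0 : (0:ℝ) < x := by linarith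
    have hL : HasDerivAt (fun y => Real.log y - digamma y) (1/x - trigamma x) x := by
      have := (Real.hasDerivAt_log hx0.ne').sub (hasDerivAt_digamma hx0)
      have hconv : x⁻¹ - trigamma x = 1/x - trigamma x := by rw [one_div]
      rwa [hconv] at this
    have hLne : Lf x ≠ 0 := (hLpos x hx1).ne'
    have hLne' : Real.log x - digamma x ≠ 0 := hLne
    have h1 : HasDerivAt (fun y => 1 / (Real.log y - digamma y))
        (-(1/x - trigamma x) / (Lf x) ^ 2) x := by
      have := hL.inv hLne'
      simp only [one_div]
      exact this.congr_deriv (by simp only [Lf, one_div])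
    have h2 : HasDerivAt (fun y : ℝ => 2 * y) 2 x := by
      simpa using (hasDerivAt_id x).const_mul (2:ℝ)
    have h3 := h1.sub h2
    exact h3.congr_deriv (by unfold Tf; ring)
  apply strictAntiOn_of_deriv_neg (convex_Ioi 1)
  · intro x hx
    exact ((hderiv x hx).continuousAt).continuousWithinAt
  · intro x hx
    rw [interior_Ioi] at hx
    rw [(hderiv x hx).deriv]
    have hx1 : (1:ℝ) < x := hx
    have hchain : Tf x < 2 * (Lf x) ^ 2 := by
      have h1 : Tf x ≤ rb x := Tf_le_rb hx1.le
      have h2 : rb x < 2 * hb x ^ 2 := q3_ineq hx1.le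
      have h3 : hb x ≤ Lf x := Lf_ge_hb hx1.le
      have h4 : 0 < hb x := hb_pos hx1.le
      nlinarith
    have hL2 : 0 < (Lf x) ^ 2 := pow_pos (hLpos x hx) 2
    rw [sub_neg, div_lt_iff₀ hL2]
    linarith
end

section
/- The function f₃(x) = x²(ψ(x) - ln(x)) + x/2 maps (0, ∞) onto (-1/12, 0): it satisfies -1/12 < f₃(x) < 0 for all x > 0, tends to 0 as x → 0⁺, and tends to -1/12 as x → ∞. -/
open Real Filter Topology Set

section AuxF3
open Finset Nat

noncomputable def phi0 (y : ℝ) : ℝ := Real.log (y+1) - Real.log y - 1/y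
noncomputable def phi (y : ℝ) : ℝ := phi0 y + 1/(2*y*(y+1))
noncomputable def tele (y : ℝ) : ℝ := (1/y^2 - 1/(y+1)^2)/12

noncomputable def Gfun (u : ℝ) : ℝ := (u^2-1)/(2*u) - Real.log u
noncomputable def Ffun (u : ℝ) : ℝ :=
  Real.log u - (u-1) + (u-1)^2/(2*u) + (u+1)*(u-1)^3/(12*u^2)
noncomputable def Hfun (u : ℝ) : ℝ := (u-1)^5/6 - Ffun u

lemma hasDerivAt_Gfun {u : ℝ} (hu : 0 < u) :
    HasDerivAt Gfun ((u-1)^2/(2*u^2)) u := by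
  have h1 := (((hasDerivAt_pow 2 u).sub_const 1).div
      ((hasDerivAt_id u).const_mul 2) (by positivity : (2:ℝ)*u ≠ 0)).sub
      (Real.hasDerivAt_log hu.ne')
  refine h1.congr_deriv ?_
  simp only [id, Pi.pow_apply, Pi.mul_apply, Nat.cast_ofNat]
  field_simp
  ring

lemma hasDerivAt_Ffun {u : ℝ} (hu : 0 < u) :
    HasDerivAt Ffun ((u-1)^4/(6*u^3)) u := by
  have h1 := ((Real.hasDerivAt_log hu.ne').sub ((hasDerivAt_id u).sub_const 1)).add
    ((((hasDerivAt_id u).sub_const 1).pow 2).div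
      ((hasDerivAt_id u).const_mul 2) (by positivity : (2:ℝ)*u ≠ 0))
  have h2 := h1.add
    ((((hasDerivAt_id u).add_const 1).mul (((hasDerivAt_id u).sub_const 1).pow 3)).div
      ((hasDerivAt_pow 2 u).const_mul 12) (by positivity : (12:ℝ)*u^2 ≠ 0))
  refine h2.congr_deriv ?_
  simp only [id, Pi.pow_apply, Pi.mul_apply, Nat.cast_ofNat]
  field_simp
  ring

lemma hasDerivAt_Hfun {u : ℝ} (hu : 0 < u) :
    HasDerivAt Hfun (5*(u-1)^4/6 - (u-1)^4/(6*u^3)) u := by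
  have h1 := ((((hasDerivAt_id u).sub_const 1).pow 5).div_const 6).sub (hasDerivAt_Ffun hu)
  refine h1.congr_deriv ?_
  simp only [id, Pi.pow_apply, Pi.mul_apply, Nat.cast_ofNat]
  field_simp
  ring

lemma Gfun_pos {u : ℝ} (hu : 1 < u) : 0 < Gfun u := by
  have hmono : StrictMonoOn Gfun (Set.Ici 1) := by
    apply strictMonoOn_of_deriv_pos (convex_Ici 1)
    · exact fun x hx =>
        (hasDerivAt_Gfun (lt_of_lt_of_le one_pos hx)).continuousAt.continuousWithinAt
    · intro x hx
      rw [interior_Ici] at hx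
      have hx1 : (1:ℝ) < x := hx
      rw [(hasDerivAt_Gfun (lt_trans one_pos hx1)).deriv]
      have h : (0:ℝ) < x - 1 := by linarith
      positivity
  have := hmono Set.self_mem_Ici (le_of_lt hu) hu
  simpa [Gfun] using this

lemma Ffun_pos {u : ℝ} (hu : 1 < u) : 0 < Ffun u := by
  have hmono : StrictMonoOn Ffun (Set.Ici 1) := by
    apply strictMonoOn_of_deriv_pos (convex_Ici 1)
    · exact fun x hx =>
        (hasDerivAt_Ffun (lt_of_lt_of_le one_pos hx)).continuousAt.continuousWithinAt
    · intro x hx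
      rw [interior_Ici] at hx
      have hx1 : (1:ℝ) < x := hx
      rw [(hasDerivAt_Ffun (lt_trans one_pos hx1)).deriv]
      have h : (0:ℝ) < x - 1 := by linarith
      positivity
  have := hmono Set.self_mem_Ici (le_of_lt hu) hu
  simpa [Ffun] using this

lemma Hfun_nonneg {u : ℝ} (hu : 1 ≤ u) : 0 ≤ Hfun u := by
  have hmono : MonotoneOn Hfun (Set.Ici 1) := by
    apply monotoneOn_of_deriv_nonneg (convex_Ici 1)
    · exact fun x hx =>
        (hasDerivAt_Hfun (lt_of_lt_of_le one_pos hx)).continuousAt.continuousWithinAt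
    · intro x hx
      rw [interior_Ici] at hx
      have hx1 : (1:ℝ) < x := hx
      exact (hasDerivAt_Hfun (lt_trans one_pos hx1)).differentiableAt.differentiableWithinAt
    · intro x hx
      rw [interior_Ici] at hx
      have hx1 : (1:ℝ) < x := hx
      have hx0 : (0:ℝ) < x := lt_trans one_pos hx1
      rw [(hasDerivAt_Hfun hx0).deriv]
      have hle : (x-1)^4/(6*x^3) ≤ 5*(x-1)^4/6 := by
        rw [div_le_div_iff₀ (by positivity) (by positivity)]
        nlinarith [pow_nonneg (by linarith : (0:ℝ) ≤ x - 1) 4,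
          one_le_pow₀ hx1.le (n := 3)]
      linarith
  have := hmono Set.self_mem_Ici hu hu
  simpa [Hfun, Ffun] using this

lemma u_gt_one {y : ℝ} (hy : 0 < y) : 1 < (y+1)/y := by
  rw [lt_div_iff₀ hy]; linarith

lemma log_u {y : ℝ} (hy : 0 < y) :
    Real.log ((y+1)/y) = Real.log (y+1) - Real.log y :=
  Real.log_div (by positivity) hy.ne'

lemma phi_eq {y : ℝ} (hy : 0 < y) : phi y = -Gfun ((y+1)/y) := by
  unfold phi phi0 Gfun
  rw [log_u hy]
  have h1 : y + 1 ≠ 0 := by positivity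
  field_simp
  ring

lemma phi_add_tele_eq {y : ℝ} (hy : 0 < y) : phi y + tele y = Ffun ((y+1)/y) := by
  unfold phi phi0 tele Ffun
  rw [log_u hy]
  have h1 : y + 1 ≠ 0 := by positivity
  field_simp
  ring

lemma phi_neg {y : ℝ} (hy : 0 < y) : phi y < 0 := by
  rw [phi_eq hy]; linarith [Gfun_pos (u_gt_one hy)]

lemma neg_tele_lt_phi {y : ℝ} (hy : 0 < y) : -tele y < phi y := by
  have := Ffun_pos (u_gt_one hy)
  rw [← phi_add_tele_eq hy] at this
  linarith

lemma tele_pos {y : ℝ} (hy : 0 < y) : 0 < tele y := by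
  have h := neg_tele_lt_phi hy
  have h2 := phi_neg hy
  linarith

lemma phi_add_tele_le {y : ℝ} (hy : 0 < y) : phi y + tele y ≤ 1/(6*y^5) := by
  rw [phi_add_tele_eq hy]
  have h := Hfun_nonneg (le_of_lt (u_gt_one hy))
  unfold Hfun at h
  have he : ((y+1)/y - 1)^5/6 = 1/(6*y^5) := by field_simp; ring
  linarith [he ▸ h]

lemma phi0_neg {y : ℝ} (hy : 0 < y) : phi0 y < 0 := by
  have h := Real.log_lt_sub_one_of_pos (lt_trans one_pos (u_gt_one hy)) (ne_of_gt (u_gt_one hy))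
  rw [log_u hy] at h
  have he : (y+1)/y - 1 = 1/y := by field_simp; ring
  unfold phi0
  rw [he] at h
  linarith

lemma phi0_ge {y : ℝ} (hy : 0 < y) : -(1/(y*(y+1))) ≤ phi0 y := by
  have h := Real.one_sub_inv_le_log_of_pos (lt_trans one_pos (u_gt_one hy))
  rw [log_u hy] at h
  have he : 1 - ((y+1)/y)⁻¹ = 1/(y+1) := by
    rw [inv_div]
    field_simp
    ring
  rw [he] at h
  unfold phi0
  have he2 : 1/(y+1) - 1/y = -(1/(y*(y+1))) := by field_simp; ring
  linarith [he2 ▸ (sub_le_sub_right h (1/y) : 1/(y+1) - 1/y ≤ _)]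

lemma sum_phi0 {x : ℝ} (hx : 0 < x) (n : ℕ) :
    ∑ k ∈ Finset.range n, phi0 (x+k) =
      Real.log (x+n) - Real.log x - ∑ k ∈ Finset.range n, 1/(x+k) := by
  induction n with
  | zero => simp
  | succ n ih =>
    rw [Finset.sum_range_succ, Finset.sum_range_succ, ih]
    unfold phi0
    push_cast
    ring_nf

lemma sum_inv_mul {x : ℝ} (hx : 0 < x) (n : ℕ) :
    ∑ k ∈ Finset.range n, 1/((x+k)*(x+k+1)) = 1/x - 1/(x+n) := by
  induction n with
  | zero => simp
  | succ n ih =>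
    rw [Finset.sum_range_succ, ih]
    have h1 : (0:ℝ) < x + n := by positivity
    have h2 : (0:ℝ) < x + n + 1 := by positivity
    push_cast
    field_simp
    ring

lemma sum_tele {x : ℝ} (hx : 0 < x) (n : ℕ) :
    ∑ k ∈ Finset.range n, tele (x+k) = (1/x^2 - 1/(x+n)^2)/12 := by
  induction n with
  | zero => simp
  | succ n ih =>
    rw [Finset.sum_range_succ, ih]
    have h1 : (0:ℝ) < x + n := by positivity
    have h2 : (0:ℝ) < x + n + 1 := by positivity
    unfold tele
    push_cast
    field_simp
    ring

lemma tendsto_inv_add {x : ℝ} :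
    Tendsto (fun n : ℕ => 1/(x + n)) atTop (𝓝 0) := by
  have h : Tendsto (fun n : ℕ => x + (n:ℝ)) atTop atTop :=
    tendsto_atTop_add_const_left _ x tendsto_natCast_atTop_atTop
  simpa [one_div, Pi.inv_def] using h.inv_tendsto_atTop

lemma hasSum_invmul {x : ℝ} (hx : 0 < x) :
    HasSum (fun k : ℕ => 1/((x+k)*(x+k+1))) (1/x) := by
  rw [hasSum_iff_tendsto_nat_of_nonneg (fun k => by positivity)]
  simp only [sum_inv_mul hx]
  simpa using (tendsto_const_nhds (x := 1/x)).sub (tendsto_inv_add (x := x))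

lemma hasSum_tele {x : ℝ} (hx : 0 < x) :
    HasSum (fun k : ℕ => tele (x+k)) (1/(12*x^2)) := by
  rw [hasSum_iff_tendsto_nat_of_nonneg (fun k => (tele_pos (by positivity)).le)]
  simp only [sum_tele hx]
  have h : Tendsto (fun n : ℕ => 1/(x+n)^2) atTop (𝓝 0) := by
    have h2 := (tendsto_inv_add (x := x)).mul (tendsto_inv_add (x := x))
    simp only [one_div, ← mul_inv, ← sq, mul_zero] at h2
    simpa [inv_pow] using h2
  have h3 := ((tendsto_const_nhds (x := 1/x^2)).sub h).div_const 12
  rw [sub_zero] at h3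
  convert h3 using 2
  ring

lemma summable_neg_phi0 {x : ℝ} (hx : 0 < x) :
    Summable (fun k : ℕ => -phi0 (x+k)) := by
  apply Summable.of_nonneg_of_le
    (fun k => by linarith [phi0_neg (show (0:ℝ) < x + k by positivity)])
    (fun k => by
      have := phi0_ge (show (0:ℝ) < x + k by positivity)
      linarith)
    (hasSum_invmul hx).summable

lemma summable_phi0 {x : ℝ} (hx : 0 < x) :
    Summable (fun k : ℕ => phi0 (x+k)) := by
  simpa using (summable_neg_phi0 hx).neg

lemma summable_neg_phi {x : ℝ} (hx : 0 < x) :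
    Summable (fun k : ℕ => -phi (x+k)) := by
  apply Summable.of_nonneg_of_le
    (fun k => by linarith [phi_neg (show (0:ℝ) < x + k by positivity)])
    (fun k => by
      have := neg_tele_lt_phi (show (0:ℝ) < x + k by positivity)
      linarith)
    (hasSum_tele hx).summable

lemma summable_phi {x : ℝ} (hx : 0 < x) :
    Summable (fun k : ℕ => phi (x+k)) := by
  simpa using (summable_neg_phi hx).neg

lemma hasSum_half {x : ℝ} (hx : 0 < x) :
    HasSum (fun k : ℕ => 1/(2*(x+k)*(x+k+1))) (1/(2*x)) := by
  have h := (hasSum_invmul hx).div_const 2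
  have e1 : ∀ k : ℕ, 1/((x+k)*(x+k+1))/2 = 1/(2*(x+k)*(x+k+1)) := fun k => by
    rw [div_div]; congr 1; ring
  have e2 : 1/x/2 = 1/(2*x) := by rw [div_div]; congr 1; ring
  simp only [e1, e2] at h
  exact h

lemma tsum_phi_eq {x : ℝ} (hx : 0 < x) :
    ∑' k : ℕ, phi (x+k) = (∑' k : ℕ, phi0 (x+k)) + 1/(2*x) := by
  have h : (fun k : ℕ => phi (x+k)) =
      fun k : ℕ => phi0 (x+k) + 1/(2*(x+k)*(x+k+1)) := by
    funext k; rfl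
  rw [h, Summable.tsum_add (summable_phi0 hx) (hasSum_half hx).summable,
    (hasSum_half hx).tsum_eq]

lemma tsum_phi_neg {x : ℝ} (hx : 0 < x) : ∑' k : ℕ, phi (x+k) < 0 := by
  have h0 : phi (x + ((0:ℕ):ℝ)) < 0 := by simpa using phi_neg hx
  have h := Summable.tsum_lt_tsum (f := fun k : ℕ => phi (x+k)) (g := fun _ : ℕ => (0:ℝ)) (i := 0)
    (fun k => (phi_neg (show (0:ℝ) < x + k by positivity)).le)
    h0 (summable_phi hx) summable_zero
  simpa using h

lemma tsum_phi_gt {x : ℝ} (hx : 0 < x) : -(1/(12*x^2)) < ∑' k : ℕ, phi (x+k) := by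
  have h0 : -tele (x + ((0:ℕ):ℝ)) < phi (x + ((0:ℕ):ℝ)) := by simpa using neg_tele_lt_phi hx
  have h := Summable.tsum_lt_tsum (f := fun k : ℕ => -tele (x+k)) (g := fun k : ℕ => phi (x+k)) (i := 0)
    (fun k => (neg_tele_lt_phi (show (0:ℝ) < x + k by positivity)).le)
    h0 (hasSum_tele hx).summable.neg (summable_phi hx)
  rwa [tsum_neg, (hasSum_tele hx).tsum_eq] at h

noncomputable def psiAux (x : ℝ) : ℝ := Real.log x + ∑' k : ℕ, phi0 (x + k)

lemma tsum_phi0_nonpos {z : ℝ} (hz : 0 < z) : ∑' k : ℕ, phi0 (z+k) ≤ 0 :=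
  tsum_nonpos (fun k => (phi0_neg (show (0:ℝ) < z + k by positivity)).le)

lemma tsum_phi0_ge {z : ℝ} (hz : 0 < z) : -(1/z) ≤ ∑' k : ℕ, phi0 (z+k) := by
  have h := Summable.tsum_le_tsum (f := fun k : ℕ => -(1/((z+k)*(z+k+1)))) (g := fun k : ℕ => phi0 (z+k))
    (fun k => by
      have := phi0_ge (show (0:ℝ) < z + k by positivity)
      linarith)
    (hasSum_invmul hz).summable.neg (summable_phi0 hz)
  rwa [tsum_neg, (hasSum_invmul hz).tsum_eq] at h

lemma logGammaSeq {y : ℝ} (hy : 0 < y) {n : ℕ} (hn : 1 ≤ n) :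
    Real.log (Real.GammaSeq y n) =
      y * Real.log n + Real.log (n !) - ∑ k ∈ Finset.range (n+1), Real.log (y + k) := by
  have hn0 : (0:ℝ) < n := by exact_mod_cast hn
  have hprod : (0:ℝ) < ∏ j ∈ Finset.range (n+1), (y + j) :=
    Finset.prod_pos (fun j _ => by positivity)
  have hfact : (0:ℝ) < (n ! : ℝ) := by exact_mod_cast n.factorial_pos
  rw [Real.GammaSeq, Real.log_div (by positivity) hprod.ne',
    Real.log_mul (by positivity) hfact.ne', Real.log_rpow hn0,
    Real.log_prod (fun j _ => by positivity)]

lemma hasDerivAt_fn (n : ℕ) {y : ℝ} (hy : 0 < y) :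
    HasDerivAt (fun y : ℝ =>
        y * Real.log n + Real.log (n !) - ∑ k ∈ Finset.range (n+1), Real.log (y + k))
      (Real.log n - ∑ k ∈ Finset.range (n+1), 1/(y+k)) y := by
  have h1 : HasDerivAt (fun y : ℝ => y * Real.log n) (Real.log n) y := by
    simpa using (hasDerivAt_id y).mul_const (Real.log n)
  have h2 : HasDerivAt (fun y : ℝ => ∑ k ∈ Finset.range (n+1), Real.log (y + k))
      (∑ k ∈ Finset.range (n+1), 1/(y+k)) y := by
    apply HasDerivAt.fun_sum
    intro k _
    have h := ((hasDerivAt_id y).add_const (k:ℝ)).log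
      (by positivity : (fun y : ℝ => y + (k:ℝ)) y ≠ 0)
    simpa [one_div] using h
  simpa using (h1.add_const (Real.log (n !))).fun_sub h2

lemma psiAux_split {y : ℝ} (hy : 0 < y) (n : ℕ) :
    psiAux y = Real.log (y + (n+1)) - ∑ k ∈ Finset.range (n+1), 1/(y+k)
      + ∑' k : ℕ, phi0 ((y + (n+1)) + k) := by
  have hs := Summable.sum_add_tsum_nat_add (f := fun k : ℕ => phi0 (y + k)) (n+1) (summable_phi0 hy)
  have htail : ∑' k : ℕ, phi0 (y + ↑(k + (n+1))) = ∑' k : ℕ, phi0 ((y + (n+1)) + k) := by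
    apply tsum_congr
    intro k
    congr 1
    push_cast
    ring
  rw [htail] at hs
  unfold psiAux
  rw [← hs, sum_phi0 hy (n+1)]
  push_cast
  ring

lemma unif_est {b : ℝ} (hb : 0 < b) {y : ℝ} (hy : y ∈ Set.Ioo (0:ℝ) b) {n : ℕ} (hn : 1 ≤ n) :
    |psiAux y - (Real.log n - ∑ k ∈ Finset.range (n+1), 1/(y+k))| ≤ (b+2)/n := by
  obtain ⟨hy0, hyb⟩ := hy
  have hn0 : (0:ℝ) < n := by exact_mod_cast hn
  set z : ℝ := y + (n+1) with hz
  have hz0 : 0 < z := by positivity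
  have hzn : (n:ℝ) ≤ z := by
    simp only [hz]; linarith
  rw [psiAux_split hy0 n]
  have hT1 : ∑' k : ℕ, phi0 (z + k) ≤ 0 := tsum_phi0_nonpos hz0
  have hT2 : -(1/z) ≤ ∑' k : ℕ, phi0 (z + k) := tsum_phi0_ge hz0
  have hinv : 1/z ≤ 1/n := by
    apply one_div_le_one_div_of_le hn0 hzn
  have hlog1 : Real.log n ≤ Real.log z := Real.log_le_log hn0 hzn
  have hlog2 : Real.log z - Real.log n ≤ (b+1)/n := by
    rw [← Real.log_div hz0.ne' hn0.ne']
    have h := Real.log_le_sub_one_of_pos (show (0:ℝ) < z/n by positivity)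
    have h2 : z/n - 1 ≤ (b+1)/n := by
      rw [div_sub_one hn0.ne', div_le_div_iff₀ hn0 hn0]
      have : z - n ≤ b + 1 := by simp only [hz]; push_cast; linarith
      nlinarith
    linarith
  rw [abs_le]
  constructor
  · have : -(1/n) ≤ -(1/z) := by linarith
    have hb1 : (0:ℝ) ≤ (b+1)/n := by positivity
    have expand : Real.log z - ∑ k ∈ Finset.range (n+1), 1/(y+k) + ∑' k : ℕ, phi0 (z + k)
        - (Real.log n - ∑ k ∈ Finset.range (n+1), 1/(y+k))
        = (Real.log z - Real.log n) + ∑' k : ℕ, phi0 (z + k) := by ring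
    rw [expand]
    have hd : -( (b+2)/n ) ≤ 0 + -(1/n) := by
      rw [zero_add, neg_le_neg_iff, div_le_div_iff₀ hn0 hn0]
      nlinarith
    calc -((b+2)/n) ≤ 0 + -(1/n) := hd
    _ ≤ (Real.log z - Real.log n) + ∑' k : ℕ, phi0 (z + k) := by
        apply _root_.add_le_add
        · linarith
        · linarith
  · have expand : Real.log z - ∑ k ∈ Finset.range (n+1), 1/(y+k) + ∑' k : ℕ, phi0 (z + k)
        - (Real.log n - ∑ k ∈ Finset.range (n+1), 1/(y+k))
        = (Real.log z - Real.log n) + ∑' k : ℕ, phi0 (z + k) := by ring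
    rw [expand]
    have : (b+1)/n + 0 ≤ (b+2)/n := by
      rw [add_zero, div_le_div_iff₀ hn0 hn0]
      nlinarith
    calc (Real.log z - Real.log n) + ∑' k : ℕ, phi0 (z + k) ≤ (b+1)/n + 0 :=
        _root_.add_le_add hlog2 hT1
    _ ≤ (b+2)/n := this

lemma hasDerivAt_logGamma {x : ℝ} (hx : 0 < x) :
    HasDerivAt (fun y => Real.log (Real.Gamma y)) (psiAux x) x := by
  set b : ℝ := x + 1 with hbdef
  have hb : 0 < b := by positivity
  apply hasDerivAt_of_tendstoUniformlyOn (l := atTop) (isOpen_Ioo (a := (0:ℝ)) (b := b))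
    (f := fun (n : ℕ) (y : ℝ) =>
      y * Real.log n + Real.log (n !) - ∑ k ∈ Finset.range (n+1), Real.log (y + k))
    (f' := fun (n : ℕ) (y : ℝ) =>
      Real.log n - ∑ k ∈ Finset.range (n+1), 1/(y+k))
    (g' := psiAux)
  · -- uniform convergence
    rw [Metric.tendstoUniformlyOn_iff]
    intro ε hε
    have h1 : Tendsto (fun n : ℕ => (b+2)/n) atTop (𝓝 0) :=
      tendsto_const_div_atTop_nhds_zero_nat (b+2)
    filter_upwards [h1.eventually (gt_mem_nhds hε), eventually_ge_atTop 1] with n h2 hn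
    intro y hy
    rw [Real.dist_eq]
    calc |psiAux y - (Real.log n - ∑ k ∈ Finset.range (n+1), 1/(y+k))| ≤ (b+2)/n :=
        unif_est hb hy hn
    _ < ε := h2
  · -- derivatives
    filter_upwards with n
    intro y hy
    exact hasDerivAt_fn n hy.1
  · -- pointwise convergence
    intro y hy
    have h := (Real.GammaSeq_tendsto_Gamma y).log (Real.Gamma_pos_of_pos hy.1).ne'
    apply h.congr'
    filter_upwards [eventually_ge_atTop 1] with n hn
    exact logGammaSeq hy.1 hn
  · exact ⟨hx, by simp [hbdef]⟩

lemma digamma_eq' {x : ℝ} (hx : 0 < x) :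
    deriv Real.Gamma x / Real.Gamma x = psiAux x := by
  have hne : ∀ m : ℕ, x ≠ -(m:ℝ) := by
    intro m
    have h1 : -(m:ℝ) ≤ 0 := by simp [Nat.cast_nonneg]
    exact ne_of_gt (lt_of_le_of_lt h1 hx)
  have hΓ : HasDerivAt Real.Gamma (deriv Real.Gamma x) x :=
    (Real.differentiableAt_Gamma hne).hasDerivAt
  have h1 := hΓ.log (Real.Gamma_pos_of_pos hx).ne'
  exact h1.unique (hasDerivAt_logGamma hx)

lemma f3_eq {x : ℝ} (hx : 0 < x) :
    x ^ 2 * (digamma x - Real.log x) + x / 2 = x^2 * ∑' k : ℕ, phi (x+k) := by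
  unfold digamma
  rw [digamma_eq' hx]
  unfold psiAux
  rw [tsum_phi_eq hx]
  have hx' : x ≠ 0 := hx.ne'
  field_simp
  ring

lemma f3_bounds {x : ℝ} (hx : 0 < x) :
    -1/12 < x ^ 2 * (digamma x - Real.log x) + x / 2 ∧
    x ^ 2 * (digamma x - Real.log x) + x / 2 < 0 := by
  rw [f3_eq hx]
  constructor
  · have h := mul_lt_mul_of_pos_left (tsum_phi_gt hx) (show (0:ℝ) < x^2 by positivity)
    have he : x^2 * -(1/(12*x^2)) = -1/12 := by field_simp
    linarith [he ▸ h]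
  · exact mul_neg_of_pos_of_neg (by positivity) (tsum_phi_neg hx)

lemma tsum_phi_add_tele {x : ℝ} (hx : 0 < x) :
    ∑' k : ℕ, (phi (x+k) + tele (x+k)) = (∑' k : ℕ, phi (x+k)) + 1/(12*x^2) := by
  rw [Summable.tsum_add (summable_phi hx) (hasSum_tele hx).summable, (hasSum_tele hx).tsum_eq]

lemma f3_upper_far {x : ℝ} (hx : 1 ≤ x) :
    x ^ 2 * (digamma x - Real.log x) + x / 2 ≤ -1/12 + 1/(3*x^2) := by
  have hx0 : 0 < x := lt_of_lt_of_le one_pos hx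
  rw [f3_eq hx0]
  have hterm : ∀ k : ℕ, phi (x+k) + tele (x+k) ≤ (1/(3*x^3)) * (1/((x+k)*(x+k+1))) := by
    intro k
    set z : ℝ := x + k with hzdef
    have hk : (0:ℝ) ≤ (k:ℝ) := Nat.cast_nonneg k
    have hz1 : 1 ≤ z := by rw [hzdef]; linarith
    have hz0 : 0 < z := lt_of_lt_of_le one_pos hz1
    have hxz : x ≤ z := by rw [hzdef]; linarith
    calc phi z + tele z ≤ 1/(6*z^5) := phi_add_tele_le hz0
    _ ≤ (1/(3*x^3)) * (1/((z)*(z+1))) := by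
        have hcomb : 1/(3*x^3) * (1/(z*(z+1))) = 1/(3*x^3*(z*(z+1))) := by
          field_simp
        rw [hcomb, div_le_div_iff₀ (by positivity) (by positivity)]
        have h1 : x^3 ≤ z^3 := pow_le_pow_left₀ (le_of_lt hx0) hxz 3
        have h2 : z + 1 ≤ 2*z := by linarith
        nlinarith [pow_pos hz0 3, pow_pos hz0 4,
          mul_le_mul h1 h2 (by positivity) (by positivity : (0:ℝ) ≤ z^3)]
    _ = (1/(3*x^3)) * (1/((x+k)*(x+k+1))) := by rw [hzdef]
  have hsum := Summable.tsum_le_tsum hterm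
    ((summable_phi hx0).add (hasSum_tele hx0).summable)
    ((hasSum_invmul hx0).mul_left (1/(3*x^3))).summable
  rw [tsum_phi_add_tele hx0, ((hasSum_invmul hx0).mul_left (1/(3*x^3))).tsum_eq] at hsum
  have h2 : ∑' k : ℕ, phi (x+k) ≤ 1/(3*x^3) * (1/x) - 1/(12*x^2) := by linarith
  have h3 := mul_le_mul_of_nonneg_left h2 (show (0:ℝ) ≤ x^2 by positivity)
  have he : x^2 * (1/(3*x^3) * (1/x) - 1/(12*x^2)) = -1/12 + 1/(3*x^2) := by
    field_simp
    ring
  linarith [he ▸ h3]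

lemma f3_tendsto_atTop :
    Tendsto (fun x : ℝ => x ^ 2 * (digamma x - Real.log x) + x / 2) atTop (𝓝 (-1/12)) := by
  have hupper : Tendsto (fun x : ℝ => -1/12 + 1/(3*x^2)) atTop (𝓝 (-1/12)) := by
    have h0 : Tendsto (fun x : ℝ => 3*x^2) atTop atTop :=
      (tendsto_pow_atTop two_ne_zero).const_mul_atTop (by norm_num)
    have h1 := h0.inv_tendsto_atTop
    have h2 := (tendsto_const_nhds (x := (-1/12 : ℝ)) (f := atTop)).add h1
    simpa [one_div] using h2
  apply tendsto_of_tendsto_of_tendsto_of_le_of_le' tendsto_const_nhds hupper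
  · filter_upwards [eventually_gt_atTop (0:ℝ)] with x hx
    linarith [(f3_bounds hx).1]
  · filter_upwards [eventually_ge_atTop (1:ℝ)] with x hx
    exact f3_upper_far hx

lemma tsum_phi_split {x : ℝ} (hx : 0 < x) :
    ∑' k : ℕ, phi (x+k) = phi x + ∑' k : ℕ, phi ((x+1)+k) := by
  have hs := Summable.sum_add_tsum_nat_add (f := fun k : ℕ => phi (x + k)) 1 (summable_phi hx)
  have htail : ∑' k : ℕ, phi (x + ↑(k + 1)) = ∑' k : ℕ, phi ((x+1) + k) := by
    apply tsum_congr
    intro k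
    congr 1
    push_cast
    ring
  rw [htail] at hs
  rw [← hs]
  norm_num

lemma f3_tendsto_zero :
    Tendsto (fun x : ℝ => x ^ 2 * (digamma x - Real.log x) + x / 2) (𝓝[>] (0:ℝ)) (𝓝 0) := by
  have hA : Tendsto (fun x : ℝ => x^2 * phi x) (𝓝[>] (0:ℝ)) (𝓝 0) := by
    have t1 : Tendsto (fun x : ℝ => x^2 * Real.log (x+1)) (𝓝[>] (0:ℝ)) (𝓝 0) := by
      have c : ContinuousAt (fun x : ℝ => x^2 * Real.log (x+1)) 0 :=
        ((continuous_pow 2).continuousAt).mul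
          ((Real.continuousAt_log (by norm_num)).comp ((continuous_id.add continuous_const).continuousAt))
      have := c.tendsto.mono_left (nhdsWithin_le_nhds (s := Set.Ioi (0:ℝ)))
      simpa using this
    have t2 : Tendsto (fun x : ℝ => Real.log x * x^2) (𝓝[>] (0:ℝ)) (𝓝 0) := by
      have h := tendsto_log_mul_rpow_nhdsGT_zero (show (0:ℝ) < 2 by norm_num)
      apply h.congr'
      filter_upwards [self_mem_nhdsWithin] with x hx
      rw [show ((2:ℝ) = ((2:ℕ):ℝ)) by norm_num, Real.rpow_natCast]
    have t3 : Tendsto (fun x : ℝ => x) (𝓝[>] (0:ℝ)) (𝓝 0) := by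
      have c : ContinuousAt (fun x : ℝ => x) 0 := continuousAt_id
      exact c.tendsto.mono_left (nhdsWithin_le_nhds (s := Set.Ioi (0:ℝ)))
    have t4 : Tendsto (fun x : ℝ => x/(2*(x+1))) (𝓝[>] (0:ℝ)) (𝓝 0) := by
      have c : ContinuousAt (fun x : ℝ => x/(2*(x+1))) 0 := by
        apply ContinuousAt.div continuous_id.continuousAt
          ((continuous_const.mul (continuous_id.add continuous_const)).continuousAt)
        norm_num
      have := c.tendsto.mono_left (nhdsWithin_le_nhds (s := Set.Ioi (0:ℝ)))
      simpa using this
    have hcomb := ((t1.sub t2).sub t3).add t4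
    rw [show ((0:ℝ) - 0 - 0 + 0 = 0) by ring] at hcomb
    apply hcomb.congr'
    filter_upwards [self_mem_nhdsWithin] with x hx
    have hx0 : (0:ℝ) < x := hx
    unfold phi phi0
    field_simp
  have hB : Tendsto (fun x : ℝ => x^2 * ∑' k : ℕ, phi ((x+1)+k)) (𝓝[>] (0:ℝ)) (𝓝 0) := by
    have hlow : Tendsto (fun x : ℝ => -(x^2)/12) (𝓝[>] (0:ℝ)) (𝓝 0) := by
      have c : ContinuousAt (fun x : ℝ => -(x^2)/12) 0 :=
        (((continuous_pow 2).neg).div_const 12).continuousAt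
      have := c.tendsto.mono_left (nhdsWithin_le_nhds (s := Set.Ioi (0:ℝ)))
      simpa using this
    apply tendsto_of_tendsto_of_tendsto_of_le_of_le' hlow tendsto_const_nhds
    · filter_upwards [self_mem_nhdsWithin] with x hx
      have hx0 : (0:ℝ) < x := hx
      have hx1 : (0:ℝ) < x + 1 := by linarith
      have h1 := tsum_phi_gt hx1
      have h2 : (1:ℝ)/(12*(x+1)^2) ≤ 1/12 := by
        rw [div_le_div_iff₀ (by positivity) (by norm_num)]
        nlinarith
      have h3 : -(1/12 : ℝ) ≤ ∑' k : ℕ, phi ((x+1)+k) := by linarith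
      have h4 := mul_le_mul_of_nonneg_left h3 (show (0:ℝ) ≤ x^2 by positivity)
      calc -(x^2)/12 = x^2 * (-(1/12)) := by ring
      _ ≤ x^2 * ∑' k : ℕ, phi ((x+1)+k) := h4
    · filter_upwards [self_mem_nhdsWithin] with x hx
      have hx0 : (0:ℝ) < x := hx
      have hx1 : (0:ℝ) < x + 1 := by linarith
      have h1 := tsum_phi_neg hx1
      exact (mul_nonpos_of_nonneg_of_nonpos (by positivity) h1.le)
  have hcomb := hA.add hB
  rw [add_zero] at hcomb
  apply hcomb.congr'
  filter_upwards [self_mem_nhdsWithin] with x hx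
  have hx0 : (0:ℝ) < x := hx
  rw [← mul_add, ← tsum_phi_split hx0, ← f3_eq hx0]

end AuxF3

theorem f3_range :
    (∀ x : ℝ, 0 < x →
      -1/12 < x ^ 2 * (digamma x - Real.log x) + x / 2 ∧
      x ^ 2 * (digamma x - Real.log x) + x / 2 < 0) ∧
    Tendsto (fun x : ℝ => x ^ 2 * (digamma x - Real.log x) + x / 2)
      (𝓝[>] 0) (𝓝 0) ∧
    Tendsto (fun x : ℝ => x ^ 2 * (digamma x - Real.log x) + x / 2)
      atTop (𝓝 (-1/12)) := by
  exact ⟨fun x hx => f3_bounds hx, f3_tendsto_zero, f3_tendsto_atTop⟩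
end

section
/- For x > 0, 1/x + 1/x² - ψ'(x) < 1/(2x²) - 1/(6x³) + 1/(30x⁵), where ψ' is the trigamma function. -/
open Real Filter Topology Set

namespace TrigammaAux

local notation "γ" => Real.eulerMascheroniConstant

/-- Terms of the digamma series. -/
noncomputable def u (n : ℕ) (y : ℝ) : ℝ := ((n : ℝ) + 1)⁻¹ - (y + n)⁻¹

/-- The digamma function as a series. -/
noncomputable def psi (y : ℝ) : ℝ := -γ + ∑' n : ℕ, u n y

/-- Derivative of `logGammaSeq · n`. -/
noncomputable def d (n : ℕ) (y : ℝ) : ℝ :=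
  Real.log n - ∑ m ∈ Finset.range (n + 1), (y + m)⁻¹

lemma summable_base : Summable (fun n : ℕ => 1 / ((n : ℝ) + 1) ^ 2) := by
  have := Real.summable_one_div_nat_pow.mpr (one_lt_two : 1 < 2)
  have h2 := (summable_nat_add_iff 1).mpr this
  refine h2.congr fun n => ?_
  push_cast
  ring

lemma u_bound {a b : ℝ} (ha0 : 0 < a) (ha1 : a ≤ 1) (hb : 0 < b) {y : ℝ}
    (hy : y ∈ Ioo a b) (n : ℕ) :
    |u n y| ≤ (b + 1) / a * (1 / ((n : ℝ) + 1) ^ 2) := by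
  obtain ⟨hy1, hy2⟩ := hy
  have hy0 : 0 < y := lt_trans ha0 hy1
  have hn0 : (0 : ℝ) ≤ n := Nat.cast_nonneg n
  have hden : 0 < ((n : ℝ) + 1) * (y + n) := by positivity
  have hrepr : u n y = (y - 1) / (((n : ℝ) + 1) * (y + n)) := by
    unfold u
    field_simp
    ring
  rw [hrepr, abs_div, abs_of_pos hden]
  have hnum : |y - 1| ≤ b + 1 := by
    rw [abs_le]; constructor <;> nlinarith
  have h0 : a * ((n : ℝ) + 1) ≤ y + n := by nlinarith
  have hden2 : a * ((n : ℝ) + 1) ^ 2 ≤ ((n : ℝ) + 1) * (y + n) :=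
    calc a * ((n : ℝ) + 1) ^ 2 = ((n : ℝ) + 1) * (a * ((n : ℝ) + 1)) := by ring
      _ ≤ ((n : ℝ) + 1) * (y + n) := by
          exact mul_le_mul_of_nonneg_left h0 (by positivity)
  calc |y - 1| / (((n : ℝ) + 1) * (y + n))
      ≤ (b + 1) / (a * ((n : ℝ) + 1) ^ 2) := by
        apply div_le_div₀ (by positivity) hnum (by positivity) hden2
    _ = (b + 1) / a * (1 / ((n : ℝ) + 1) ^ 2) := by
        field_simp

lemma harmonic_cast (k : ℕ) :
    ((harmonic k : ℚ) : ℝ) = ∑ m ∈ Finset.range k, ((m : ℝ) + 1)⁻¹ := by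
  rw [harmonic]
  push_cast
  rfl

lemma tendsto_c : Tendsto (fun n : ℕ => Real.log n - ∑ m ∈ Finset.range (n + 1), ((m : ℝ) + 1)⁻¹)
    atTop (𝓝 (-γ)) := by
  have h1 : Tendsto (fun n : ℕ => -(((harmonic n : ℚ) : ℝ) - Real.log n) - ((n : ℝ) + 1)⁻¹)
      atTop (𝓝 (-γ - 0)) := by
    refine Tendsto.sub (Real.tendsto_harmonic_sub_log.neg) ?_
    have := tendsto_one_div_add_atTop_nhds_zero_nat (𝕜 := ℝ)
    simpa [one_div] using this
  rw [sub_zero] at h1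
  refine h1.congr fun n => ?_
  rw [← harmonic_cast (n + 1)]
  have : ((harmonic (n + 1) : ℚ) : ℝ) = ((harmonic n : ℚ) : ℝ) + ((n : ℝ) + 1)⁻¹ := by
    rw [harmonic_succ]
    push_cast
    ring
  rw [this]
  ring

lemma hasDerivAt_logGammaSeq {y : ℝ} (hy : 0 < y) (n : ℕ) :
    HasDerivAt (fun z => Real.BohrMollerup.logGammaSeq z n) (d n y) y := by
  have hsum : HasDerivAt (fun z => ∑ m ∈ Finset.range (n + 1), Real.log (z + m))
      (∑ m ∈ Finset.range (n + 1), (y + m)⁻¹) y := by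
    apply HasDerivAt.fun_sum
    intro m _
    have hpos : y + (m : ℝ) ≠ 0 := by positivity
    have := ((hasDerivAt_id y).add_const (m : ℝ)).log hpos
    simpa [one_div] using this
  have h1 : HasDerivAt (fun z : ℝ => z * Real.log n + Real.log (Nat.factorial n))
      (Real.log n) y := (hasDerivAt_mul_const _).add_const _
  have := h1.fun_sub hsum
  unfold Real.BohrMollerup.logGammaSeq d
  simpa using this

lemma hasDerivAt_logGamma {x : ℝ} (hx : 0 < x) :
    HasDerivAt (fun y => Real.log (Real.Gamma y)) (psi x) x := by
  set a : ℝ := min (x / 2) (1 / 2) with ha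
  set b : ℝ := x + 1 with hb
  have ha0 : 0 < a := lt_min (by linarith) (by norm_num)
  have ha1 : a ≤ 1 := le_trans (min_le_right _ _) (by norm_num)
  have hb0 : 0 < b := by simp [hb]; linarith
  have hax : a < x := lt_of_le_of_lt (min_le_left _ _) (by linarith)
  have hxb : x < b := by simp [hb]
  have hmem : x ∈ Ioo a b := ⟨hax, hxb⟩
  -- uniform convergence of the sum part
  have hBsum : Summable (fun n : ℕ => (b + 1) / a * (1 / ((n : ℝ) + 1) ^ 2)) :=
    summable_base.mul_left _
  have hfu : ∀ (n : ℕ) (y : ℝ), y ∈ Ioo a b → ‖u n y‖ ≤ (b + 1) / a * (1 / ((n : ℝ) + 1) ^ 2) := by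
    intro n y hy
    rw [Real.norm_eq_abs]
    exact u_bound ha0 ha1 hb0 hy n
  have base := tendstoUniformlyOn_tsum_nat hBsum hfu
  have hU : TendstoUniformlyOn (fun n y => ∑ m ∈ Finset.range (n + 1), u m y)
      (fun y => ∑' m : ℕ, u m y) atTop (Ioo a b) := by
    intro v hv
    exact (tendsto_add_atTop_nat 1).eventually (base v hv)
  -- uniform convergence of the constant part
  have hCu : TendstoUniformlyOn
      (fun (n : ℕ) (_ : ℝ) => Real.log n - ∑ m ∈ Finset.range (n + 1), ((m : ℝ) + 1)⁻¹)
      (fun _ => -γ) atTop (Ioo a b) := by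
    rw [Metric.tendstoUniformlyOn_iff]
    intro ε hε
    filter_upwards [tendsto_c (Metric.ball_mem_nhds (-γ) hε)] with n hn y _
    rw [dist_comm]
    exact hn
  have hDu : TendstoUniformlyOn d psi atTop (Ioo a b) := by
    have := hCu.add hU
    refine (this.congr ?_).congr_right ?_
    · filter_upwards with n
      intro y _
      unfold d u
      simp only [Pi.add_apply]
      rw [Finset.sum_sub_distrib]
      ring
    · intro y _
      unfold psi
      rfl
  -- conclude
  refine hasDerivAt_of_tendstoUniformlyOn (f := fun n y => Real.BohrMollerup.logGammaSeq y n) isOpen_Ioo hDu ?_ ?_ hmem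
  · filter_upwards with n y hy
    exact hasDerivAt_logGammaSeq (lt_trans ha0 hy.1) n
  · intro y hy
    exact Real.BohrMollerup.tendsto_log_gamma (lt_trans ha0 hy.1)

lemma digamma_eq {y : ℝ} (hy : 0 < y) : digamma y = psi y := by
  have hΓd : DifferentiableAt ℝ Real.Gamma y :=
    Real.differentiableAt_Gamma fun m => by
      have : -(m : ℝ) ≤ 0 := neg_nonpos.mpr (Nat.cast_nonneg m)
      exact ne_of_gt (lt_of_le_of_lt this hy)
  have hlog : HasDerivAt (fun z => Real.log (Real.Gamma z))
      (deriv Real.Gamma y / Real.Gamma y) y :=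
    hΓd.hasDerivAt.log (Real.Gamma_pos_of_pos hy).ne'
  exact hlog.unique (hasDerivAt_logGamma hy)

lemma hasDerivAt_psi {x : ℝ} (hx : 0 < x) :
    HasDerivAt psi (∑' n : ℕ, ((x + n) ^ 2)⁻¹) x := by
  set a : ℝ := min (x / 2) (1 / 2) with ha
  set b : ℝ := x + 1 with hb
  have ha0 : 0 < a := lt_min (by linarith) (by norm_num)
  have ha1 : a ≤ 1 := le_trans (min_le_right _ _) (by norm_num)
  have hb0 : 0 < b := by simp [hb]; linarith
  have hax : a < x := lt_of_le_of_lt (min_le_left _ _) (by linarith)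
  have hxb : x < b := by simp [hb]
  have hmem : x ∈ Ioo a b := ⟨hax, hxb⟩
  have hBsum : Summable (fun n : ℕ => 1 / a ^ 2 * (1 / ((n : ℝ) + 1) ^ 2)) :=
    summable_base.mul_left _
  have hg : ∀ (n : ℕ) (y : ℝ), y ∈ Ioo a b →
      HasDerivAt (u n) (((y + (n : ℝ)) ^ 2)⁻¹) y := by
    intro n y hy
    have hy0 : 0 < y := lt_trans ha0 hy.1
    have hne : y + (n : ℝ) ≠ 0 := by positivity
    have := (((hasDerivAt_id y).add_const (n : ℝ)).inv hne).const_sub (((n : ℝ) + 1)⁻¹)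
    unfold u
    refine this.congr_deriv ?_
    simp [neg_div]
  have hg' : ∀ (n : ℕ) (y : ℝ), y ∈ Ioo a b →
      ‖((y + (n : ℝ)) ^ 2)⁻¹‖ ≤ 1 / a ^ 2 * (1 / ((n : ℝ) + 1) ^ 2) := by
    intro n y hy
    obtain ⟨hy1, hy2⟩ := hy
    have hy0 : 0 < y := lt_trans ha0 hy1
    have hn0 : (0 : ℝ) ≤ n := Nat.cast_nonneg n
    rw [Real.norm_eq_abs, abs_of_pos (by positivity)]
    have h1 : a * ((n : ℝ) + 1) ≤ y + n := by nlinarith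
    have h2 : (a * ((n : ℝ) + 1)) ^ 2 ≤ (y + n) ^ 2 :=
      pow_le_pow_left₀ (by positivity) h1 2
    calc ((y + (n : ℝ)) ^ 2)⁻¹ ≤ ((a * ((n : ℝ) + 1)) ^ 2)⁻¹ := inv_anti₀ (by positivity) h2
      _ = 1 / a ^ 2 * (1 / ((n : ℝ) + 1) ^ 2) := by rw [mul_pow]; field_simp
  have hg0 : Summable (fun n : ℕ => u n x) := by
    refine Summable.of_norm_bounded (summable_base.mul_left ((b + 1) / a)) fun n => ?_
    rw [Real.norm_eq_abs]
    exact u_bound ha0 ha1 hb0 hmem n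
  have hkey : HasDerivAt (fun z => ∑' n : ℕ, u n z) (∑' n : ℕ, ((x + (n : ℝ)) ^ 2)⁻¹) x := by
    have := hasDerivAt_tsum_of_isPreconnected hBsum isOpen_Ioo
      ((convex_Ioo a b).isPreconnected) hg hg' hmem hg0 hmem
    refine this.congr_deriv ?_
    exact tsum_congr fun n => by rw [add_comm]
  have := hkey.const_add (-γ)
  refine this.congr_deriv ?_
  exact tsum_congr fun n => rfl

lemma trigamma_eq {x : ℝ} (hx : 0 < x) : trigamma x = ∑' n : ℕ, ((x + n) ^ 2)⁻¹ := by
  have heq : digamma =ᶠ[𝓝 x] psi := by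
    filter_upwards [isOpen_Ioi.mem_nhds (mem_Ioi.mpr hx)] with y hy
    exact digamma_eq hy
  unfold trigamma
  rw [heq.deriv_eq]
  exact (hasDerivAt_psi hx).deriv

noncomputable def F (t : ℝ) : ℝ := 1 / t + 1 / (2 * t ^ 2) + 1 / (6 * t ^ 3) - 1 / (30 * t ^ 5)

lemma F_sub_lt {t : ℝ} (ht : 0 < t) : F t - F (t + 1) < 1 / t ^ 2 := by
  have h : 1 / t ^ 2 - (F t - F (t + 1)) = (5 * t ^ 2 + 5 * t + 1) / (30 * t ^ 5 * (t + 1) ^ 5) := by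
    have h1 : t + 1 > 0 := by linarith
    unfold F
    field_simp
    ring
  nlinarith [div_pos (by nlinarith : (0:ℝ) < 5 * t ^ 2 + 5 * t + 1)
    (by positivity : (0:ℝ) < 30 * t ^ 5 * (t + 1) ^ 5)]

lemma summable_inv_sq {y : ℝ} (hy : 0 < y) : Summable (fun n : ℕ => ((y + n) ^ 2)⁻¹) := by
  set a : ℝ := min y 1 with ha
  have ha0 : 0 < a := lt_min hy one_pos
  have ha1 : a ≤ 1 := min_le_right _ _
  have hay : a ≤ y := min_le_left _ _
  refine Summable.of_nonneg_of_le (fun n => by positivity)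
    (fun n => ?_) (summable_base.mul_left (1 / a ^ 2))
  have hkey : a * ((n : ℝ) + 1) ≤ y + n := by nlinarith [Nat.cast_nonneg (α := ℝ) n]
  have h1 : (0:ℝ) < a * ((n : ℝ) + 1) := by positivity
  have : (a * ((n : ℝ) + 1)) ^ 2 ≤ (y + n) ^ 2 := by nlinarith
  have h2 : ((y + n) ^ 2)⁻¹ ≤ ((a * ((n : ℝ) + 1)) ^ 2)⁻¹ := by
    apply inv_anti₀ (by positivity) this
  calc ((y + n) ^ 2)⁻¹ ≤ ((a * ((n : ℝ) + 1)) ^ 2)⁻¹ := h2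
    _ = 1 / a ^ 2 * (1 / ((n : ℝ) + 1) ^ 2) := by
        rw [mul_pow]; field_simp

lemma F_tendsto_zero : Tendsto F atTop (𝓝 0) := by
  have h : ∀ (c : ℝ) (k : ℕ), 0 < c → 0 < k → Tendsto (fun t : ℝ => 1 / (c * t ^ k)) atTop (𝓝 0) := by
    intro c k hc hk
    simp only [one_div]
    exact Tendsto.comp tendsto_inv_atTop_zero
      (Tendsto.const_mul_atTop hc (tendsto_pow_atTop hk.ne'))
  have h1 := h 1 1 one_pos one_pos
  have h2 := h 2 2 two_pos two_pos
  have h3 := h 6 3 (by norm_num) (by norm_num)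
  have h5 := h 30 5 (by norm_num) (by norm_num)
  have := ((h1.add h2).add h3).sub h5
  simp only [add_zero, sub_zero] at this
  refine this.congr fun t => ?_
  simp [F, one_mul]

lemma F_le_tsum {y : ℝ} (hy : 0 < y) : F y ≤ ∑' n : ℕ, ((y + n) ^ 2)⁻¹ := by
  have hsum := summable_inv_sq hy
  have hpart : ∀ N : ℕ, F y - F (y + N) ≤ ∑ n ∈ Finset.range N, ((y + n) ^ 2)⁻¹ := by
    intro N
    induction N with
    | zero => simp
    | succ N ih =>
      rw [Finset.sum_range_succ]
      have hyN : 0 < y + N := by positivity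
      have hk := (F_sub_lt hyN).le
      have hcast : ((N + 1 : ℕ) : ℝ) = (N : ℝ) + 1 := by push_cast; ring
      rw [hcast, ← add_assoc]
      have : ((y + N) ^ 2)⁻¹ = 1 / (y + N) ^ 2 := by rw [one_div]
      linarith [this ▸ hk]
  have hbound : ∀ N : ℕ, F y ≤ (∑' n : ℕ, ((y + n) ^ 2)⁻¹) + F (y + N) := by
    intro N
    have := hpart N
    have hle : ∑ n ∈ Finset.range N, ((y + n) ^ 2)⁻¹ ≤ ∑' n : ℕ, ((y + n) ^ 2)⁻¹ :=
      Summable.sum_le_tsum _ (fun n _ => by positivity) hsum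
    linarith
  have htend : Tendsto (fun N : ℕ => (∑' n : ℕ, ((y + n) ^ 2)⁻¹) + F (y + N)) atTop
      (𝓝 ((∑' n : ℕ, ((y + n) ^ 2)⁻¹) + 0)) := by
    apply Tendsto.const_add
    exact F_tendsto_zero.comp (tendsto_atTop_add_const_left _ y tendsto_natCast_atTop_atTop)
  rw [add_zero] at htend
  exact ge_of_tendsto' htend hbound

lemma F_lt_tsum {x : ℝ} (hx : 0 < x) : F x < ∑' n : ℕ, ((x + n) ^ 2)⁻¹ := by
  have hsum := summable_inv_sq hx
  rw [hsum.tsum_eq_zero_add]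
  have htail : (∑' n : ℕ, ((x + (n + 1 : ℕ)) ^ 2)⁻¹) = ∑' n : ℕ, ((x + 1 + n) ^ 2)⁻¹ := by
    apply tsum_congr; intro n; push_cast; ring_nf
  rw [htail]
  have h1 := F_le_tsum (by linarith : (0:ℝ) < x + 1)
  have h2 := F_sub_lt hx
  simp only [Nat.cast_zero, add_zero]
  have : (x ^ 2)⁻¹ = 1 / x ^ 2 := one_div _ |>.symm
  linarith [this ▸ h2]


lemma trigamma_gt {x : ℝ} (hx : 0 < x) : F x < trigamma x := by
  rw [trigamma_eq hx]
  exact F_lt_tsum hx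

end TrigammaAux

theorem trigamma_lower (x : ℝ) (hx : 0 < x) :
    1 / x + 1 / x ^ 2 - trigamma x <
      1 / (2 * x ^ 2) - 1 / (6 * x ^ 3) + 1 / (30 * x ^ 5) := by
  have h := TrigammaAux.trigamma_gt hx
  unfold TrigammaAux.F at h
  have e : 1 / x + 1 / x ^ 2 - (1 / (2 * x ^ 2) - 1 / (6 * x ^ 3) + 1 / (30 * x ^ 5))
      = 1 / x + 1 / (2 * x ^ 2) + 1 / (6 * x ^ 3) - 1 / (30 * x ^ 5) := by
    field_simp
    ring
  linarith
end
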